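/- arXiv:2402.05530 — 6 statements merged into one kernel-verified Lean document; each statement's English description precedes it below -/
import Mathlib

section
/- For every positive integer k and every nonnegative integer n, the number of plane partition diamonds of length k of n satisfies D_k(n) = Σ_{J ⊆ {α_k+1, α_k+2, …, k}} p_{a[k]}(n − m_J), where m_J = Σ_{i∈J}(3i−1) and p_{a[k]}(m) = 0 when m < 0. -/
open Finset

/-- The plane partition diamond condition of length `k` on `a : Fin (3k+1) → ℕ`,
where `a i` (0-indexed) corresponds to `a_{i+1}` (1-indexed). -/
def IsDiamond (k : ℕ) (a : Fin (3 * k + 1) → ℕ) : Prop :=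
  ∀ i : ℕ, ∀ _ : i < k,
    a ⟨3 * i + 1, by omega⟩ ≤ a ⟨3 * i, by omega⟩ ∧
    a ⟨3 * i + 2, by omega⟩ ≤ a ⟨3 * i, by omega⟩ ∧
    a ⟨3 * i + 3, by omega⟩ ≤ a ⟨3 * i + 1, by omega⟩ ∧
    a ⟨3 * i + 3, by omega⟩ ≤ a ⟨3 * i + 2, by omega⟩

/-- `ppD k n`: the number of plane partition diamonds of length `k` of `n`. -/
noncomputable def ppD (k n : ℕ) : ℕ :=
  Nat.card {a : Fin (3 * k + 1) → ℕ // IsDiamond k a ∧ ∑ i, a i = n}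

/-- The restricted partition function `p_a(n)` for a sequence `a = (a_1, …, a_r)`. -/
noncomputable def rp {r : ℕ} (a : Fin r → ℕ) (n : ℕ) : ℕ :=
  Nat.card {x : Fin r → ℕ // ∑ i, a i * x i = n}

/-- The sequence `a[k]`, 0-indexed: `seqA k i = a[k]_{i+1}`. -/
def seqA (k : ℕ) : Fin (3 * k + 1) → ℕ := fun i =>
  if ((i : ℕ) + 1) % 6 = 4 then ((i : ℕ) + 1) / 2 else (i : ℕ) + 1

/-- `α_k = ⌊(k+1)/2⌋`. -/
def alphaK (k : ℕ) : ℕ := (k + 1) / 2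

/-- `m_J = ∑_{i ∈ J} (3i − 1)`. -/
def mJ (J : Finset ℕ) : ℕ := ∑ i ∈ J, (3 * i - 1)

/-- `A_k = {1 ≤ j ≤ 3k+1 : j ≢ 4 (mod 6)}`. -/
def setA (k : ℕ) : Finset ℕ := (Finset.Icc 1 (3 * k + 1)).filter (fun j => j % 6 ≠ 4)

/-- `D[k] = lcm A_k`. -/
def DK (k : ℕ) : ℕ := (setA k).lcm id

/-- `β_k = 5α_k − 2` if `k` is odd, `β_k = 5α_k + 1` if `k` is even. -/
def betaK (k : ℕ) : ℕ := if k % 2 = 1 then 5 * alphaK k - 2 else 5 * alphaK k + 1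

/-- `φ_k(j) = j + ⌈(j−3)/5⌉` (the value is a nonnegative integer for `j ≥ 1`). -/
def phiK (j : ℕ) : ℕ := ((j : ℤ) + ⌈((j : ℚ) - 3) / 5⌉).toNat

/-- `ψ_k(j) = j − ⌈(j−3)/6⌉` (the value is a nonnegative integer for `j ≥ 1`). -/
def psiK (j : ℕ) : ℕ := ((j : ℤ) - ⌈((j : ℚ) - 3) / 6⌉).toNat

/-- `B'_k = {j ∈ B_k : j ≡ 2 or 4 (mod 5), j ≤ φ_k⁻¹(3α_k − 1)}`. -/
def setB' (k : ℕ) : Finset ℕ :=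
  (Finset.Icc 1 (betaK k)).filter
    (fun j => (j % 5 = 2 ∨ j % 5 = 4) ∧ j ≤ psiK (3 * alphaK k - 1))

/-- `ε_k(j) = 2` if `j ∈ B'_k`, else `1`. -/
def epsK (k j : ℕ) : ℕ := if j ∈ setB' k then 2 else 1

/-- `s_k(t_1, …, t_{β_k}) = ∏_{j ∈ B'_k} (1 + min{t_j, 2(D[k]/φ_k(j) − 1) − t_j})`. -/
def sK (k : ℕ) (t : ℕ → ℕ) : ℕ :=
  ∏ j ∈ setB' k, (1 + min (t j) (2 * (DK k / phiK j - 1) - t j))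

/-- Turn a `Fin β`-indexed tuple into a 1-indexed family: `tOf t j = t_j` for `1 ≤ j ≤ β`. -/
def tOf {β : ℕ} (t : Fin β → ℕ) : ℕ → ℕ := fun j =>
  if h : 1 ≤ j ∧ j ≤ β then t ⟨j - 1, by omega⟩ else 0

/-- Unsigned Stirling numbers of the first kind: `x(x+1)⋯(x+r−1) = ∑_k stirling1 r k * x^k`. -/
def stirling1 : ℕ → ℕ → ℕ
  | 0, 0 => 1
  | 0, _ + 1 => 0
  | _ + 1, 0 => 0
  | n + 1, m + 1 => stirling1 n m + n * stirling1 n (m + 1)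


/-! ### Auxiliary development -/

-- generic reindex
lemma sum_Icc_one (f : ℕ → ℕ) (r : ℕ) :
    ∑ j ∈ Icc 1 r, f j = ∑ i : Fin r, f ((i : ℕ) + 1) := by
  rw [Fin.sum_univ_eq_sum_range (fun j => f (j+1)) r,
    show Icc 1 r = Ico 1 (r+1) by rw [Finset.Ico_add_one_right_eq_Icc], Finset.sum_Ico_eq_sum_range]
  simp [add_comm]

lemma tOf_apply {β : ℕ} (a : Fin β → ℕ) (m : ℕ) (hm : m < β) :
    tOf a (m + 1) = a ⟨m, hm⟩ := by
  simp only [tOf]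
  rw [dif_pos (by omega)]
  exact congrArg a (Fin.ext (by simp))

lemma sum_tOf {β : ℕ} (a : Fin β → ℕ) :
    ∑ j ∈ Icc 1 β, tOf a j = ∑ i, a i := by
  rw [sum_Icc_one]
  exact Finset.sum_congr rfl fun i _ => by rw [tOf_apply _ _ i.2]

-- card of sigma
lemma card_sigma' {ι : Type*} [Fintype ι] (f : ι → Type*) [∀ i, Finite (f i)] :
    Nat.card (Sigma f) = ∑ i, Nat.card (f i) := by
  have : ∀ i, Fintype (f i) := fun i => Fintype.ofFinite _
  classical
  simp [Nat.card_eq_fintype_card]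

lemma sigma_subtype_ext {I X : Type*} {P : I → X → Prop}
    {p q : Σ i : I, {x : X // P i x}} (h1 : p.1 = q.1) (h2 : (p.2 : X) = (q.2 : X)) :
    p = q := by
  obtain ⟨i, x, hx⟩ := p; obtain ⟨j, y, hy⟩ := q
  dsimp at h1 h2; subst h1; subst h2; rfl


/-- number of flagged cells `i` with `j ≤ 3i-1` -/
def gF (F : Finset ℕ) (j : ℕ) : ℕ := (F.filter (fun i => j ≤ 3 * i - 1)).card

/-- the swap involution on positions -/
def sigF (F : Finset ℕ) (j : ℕ) : ℕ :=
  if j % 3 = 2 ∧ (j + 1) / 3 ∈ F then j + 1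
  else if j % 3 = 0 ∧ j / 3 ∈ F then j - 1 else j

section WithF
variable {k : ℕ} {F : Finset ℕ} (hF : F ⊆ Icc 1 k)
include hF

lemma hFmem {i : ℕ} (hi : i ∈ F) : 1 ≤ i ∧ i ≤ k := by
  have := hF hi; simp only [mem_Icc] at this; exact this

lemma sigF_invol (j : ℕ) : sigF F (sigF F j) = j := by
  unfold sigF
  by_cases h1 : j % 3 = 2 ∧ (j + 1) / 3 ∈ F
  · have h2 : 1 ≤ (j+1)/3 := (hFmem hF h1.2).1
    rw [if_pos h1]
    have : ¬((j+1) % 3 = 2 ∧ (j+2)/3 ∈ F) := by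
      rintro ⟨h, -⟩; omega
    rw [if_neg this, if_pos ⟨by omega, h1.2⟩]
    omega
  · rw [if_neg h1]
    by_cases h2 : j % 3 = 0 ∧ j / 3 ∈ F
    · have h3 : 1 ≤ j/3 := (hFmem hF h2.2).1
      rw [if_pos h2]
      have e : j - 1 + 1 = j := by omega
      rw [e, if_pos ⟨by omega, h2.2⟩]
    · rw [if_neg h2, if_neg h1, if_neg h2]

lemma sigF_mem {r j : ℕ} (hr : r = 3 * k + 1) (hj : j ∈ Icc 1 r) : sigF F j ∈ Icc 1 r := by
  simp only [mem_Icc] at hj ⊢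
  unfold sigF
  by_cases h1 : j % 3 = 2 ∧ (j + 1) / 3 ∈ F
  · have := hFmem hF h1.2; rw [if_pos h1]; omega
  · rw [if_neg h1]
    by_cases h2 : j % 3 = 0 ∧ j / 3 ∈ F
    · have := hFmem hF h2.2; rw [if_pos h2]; omega
    · rw [if_neg h2]; exact hj

lemma sum_sigF {r : ℕ} (hr : r = 3 * k + 1) (A : ℕ → ℕ) :
    ∑ j ∈ Icc 1 r, A (sigF F j) = ∑ j ∈ Icc 1 r, A j := by
  apply Finset.sum_nbij' (i := fun j => sigF F j) (j := fun j => sigF F j)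
  · exact fun j hj => sigF_mem hF hr hj
  · exact fun j hj => sigF_mem hF hr hj
  · exact fun j _ => sigF_invol hF j
  · exact fun j _ => sigF_invol hF j
  · exact fun j _ => rfl

omit hF in
lemma gF_anti {j j' : ℕ} (h : j ≤ j') : gF F j' ≤ gF F j :=
  Finset.card_le_card (fun i hi => by
    simp only [Finset.mem_filter] at hi ⊢; exact ⟨hi.1, le_trans h hi.2⟩)

lemma gF_zero {j : ℕ} (h : 3 * k ≤ j) : gF F j = 0 := by
  unfold gF
  rw [Finset.card_eq_zero, Finset.filter_eq_empty_iff]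
  intro i hi
  have := hFmem hF hi
  simp only [not_le]
  omega

lemma gF_succ {j : ℕ} (hj : 1 ≤ j) :
    gF F j = gF F (j + 1) + (if j % 3 = 2 ∧ (j + 1) / 3 ∈ F then 1 else 0) := by
  unfold gF
  classical
  rw [Finset.card_filter, Finset.card_filter]
  by_cases hc : j % 3 = 2 ∧ (j + 1) / 3 ∈ F
  · rw [if_pos hc]
    rw [show (∑ i ∈ F, if j + 1 ≤ 3 * i - 1 then 1 else 0) + 1
        = (∑ i ∈ F, if j + 1 ≤ 3 * i - 1 then 1 else 0) + ∑ i ∈ F, (if i = (j+1)/3 then 1 else 0) by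
      rw [Finset.sum_ite_eq' F ((j+1)/3) (fun _ => 1), if_pos hc.2]]
    rw [← Finset.sum_add_distrib]
    apply Finset.sum_congr rfl
    intro i hi
    have := hFmem hF hi
    split_ifs <;> omega
  · rw [if_neg hc, add_zero]
    apply Finset.sum_congr rfl
    intro i hi
    have h1 := hFmem hF hi
    have hne : j ≠ 3 * i - 1 := fun he => hc ⟨by omega, by rw [show (j+1)/3 = i by omega]; exact hi⟩
    split_ifs <;> omega

lemma gF_sum {r : ℕ} (hr : r = 3 * k + 1) :
    ∑ j ∈ Icc 1 r, gF F j = mJ F := by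
  unfold gF mJ
  classical
  have : ∀ j, (F.filter (fun i => j ≤ 3 * i - 1)).card = ∑ i ∈ F, if j ≤ 3*i-1 then 1 else 0 :=
    fun j => Finset.card_filter _ _
  simp only [this]
  rw [Finset.sum_comm]
  apply Finset.sum_congr rfl
  intro i hi
  have hik := hFmem hF hi
  rw [← Finset.card_filter]
  have e : (Icc 1 r).filter (fun x => x ≤ 3*i-1) = Icc 1 (3*i-1) := by
    ext x
    simp only [Finset.mem_filter, Finset.mem_Icc]
    omega
  rw [e, Nat.card_Icc]
  omega

-- sigF evaluation lemmas
omit hF in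
lemma sigF_one' (m : ℕ) : sigF F (3*m+1) = 3*m+1 := by
  unfold sigF
  rw [if_neg (fun h => by omega), if_neg (fun h => by omega)]

omit hF in
lemma sigF_two_mem' {m : ℕ} (h : m+1 ∈ F) : sigF F (3*m+2) = 3*m+3 := by
  unfold sigF
  rw [if_pos ⟨by omega, by rwa [show (3*m+2+1)/3 = m+1 by omega]⟩]

omit hF in
lemma sigF_two_not' {m : ℕ} (h : m+1 ∉ F) : sigF F (3*m+2) = 3*m+2 := by
  unfold sigF
  have h1 : ¬((3*m+2) % 3 = 2 ∧ (3*m+2+1)/3 ∈ F) := by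
    rw [show (3*m+2+1)/3 = m+1 by omega]; exact fun hh => h hh.2
  rw [if_neg h1, if_neg (fun hh => by omega)]

omit hF in
lemma sigF_three_mem' {m : ℕ} (h : m+1 ∈ F) : sigF F (3*m+3) = 3*m+2 := by
  unfold sigF
  rw [if_neg (fun hh => by omega), if_pos ⟨by omega, by rwa [show (3*m+3)/3 = m+1 by omega]⟩]
  omega

omit hF in
lemma sigF_three_not' {m : ℕ} (h : m+1 ∉ F) : sigF F (3*m+3) = 3*m+3 := by
  unfold sigF
  have h1 : ¬((3*m+3) % 3 = 0 ∧ (3*m+3)/3 ∈ F) := by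
    rw [show (3*m+3)/3 = m+1 by omega]; exact fun hh => h hh.2
  rw [if_neg (fun hh => by omega), if_neg h1]

section StepA
variable {A : ℕ → ℕ}
  (hd : ∀ m, m < k → A (3*m+2) ≤ A (3*m+1) ∧ A (3*m+3) ≤ A (3*m+1) ∧
      A (3*m+4) ≤ A (3*m+2) ∧ A (3*m+4) ≤ A (3*m+3))
  (hf : ∀ m, m < k → (m+1 ∈ F ↔ A (3*m+2) < A (3*m+3)))
include hd hf

lemma stepA {j : ℕ} (h1 : 1 ≤ j) (h2 : j ≤ 3*k) :
    A (sigF F (j+1)) + (if j % 3 = 2 ∧ (j+1)/3 ∈ F then 1 else 0) ≤ A (sigF F j) := by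
  obtain ⟨m, hm⟩ : ∃ m, j = 3*m+1 ∨ j = 3*m+2 ∨ j = 3*m+3 := ⟨(j-1)/3, by omega⟩
  rcases hm with hm | hm | hm <;> subst hm
  · have hmk : m < k := by omega
    rw [if_neg (fun h => by omega), sigF_one' m, show 3*m+1+1 = 3*m+2 by ring]
    by_cases hmem : m+1 ∈ F
    · rw [sigF_two_mem' hmem]
      have := (hd m hmk).2.1; omega
    · rw [sigF_two_not' hmem]
      have := (hd m hmk).1; omega
  · have hmk : m < k := by omega
    by_cases hmem : m+1 ∈ F
    · rw [if_pos ⟨by omega, by rwa [show (3*m+2+1)/3 = m+1 by omega]⟩,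
        sigF_two_mem' hmem, show 3*m+2+1 = 3*m+3 by ring, sigF_three_mem' hmem]
      have := (hf m hmk).mp hmem; omega
    · have hcond : ¬((3*m+2) % 3 = 2 ∧ (3*m+2+1)/3 ∈ F) := by
        rw [show (3*m+2+1)/3 = m+1 by omega]; exact fun hh => hmem hh.2
      rw [if_neg hcond, sigF_two_not' hmem, show 3*m+2+1 = 3*m+3 by ring,
        sigF_three_not' hmem]
      have hnot : ¬(A (3*m+2) < A (3*m+3)) := fun hc => hmem ((hf m hmk).mpr hc)
      omega
  · have hmk : m < k := by omega
    rw [if_neg (fun h => by omega), show 3*m+3+1 = 3*(m+1)+1 by ring, sigF_one' (m+1),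
      show 3*(m+1)+1 = 3*m+4 by ring]
    by_cases hmem : m+1 ∈ F
    · rw [sigF_three_mem' hmem]
      have := (hd m hmk).2.2.1; omega
    · rw [sigF_three_not' hmem]
      have := (hd m hmk).2.2.2; omega

lemma keyge : ∀ d j, 1 ≤ j → j + d = 3*k+1 → gF F j ≤ A (sigF F j) := by
  intro d
  induction d with
  | zero =>
    intro j h1 h2
    rw [gF_zero hF (by omega)]
    exact Nat.zero_le _
  | succ d ih =>
    intro j h1 h2
    have hle := stepA hF hd hf h1 (by omega)
    have hih := ih (j+1) (by omega) (by omega)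
    rw [gF_succ hF h1]
    omega

lemma keyge' {j : ℕ} (h1 : 1 ≤ j) (h2 : j ≤ 3*k+1) : gF F j ≤ A (sigF F j) :=
  keyge hF hd hf (3*k+1-j) j h1 (by omega)

lemma chainA {j : ℕ} (h1 : 1 ≤ j) (h2 : j ≤ 3*k) :
    A (sigF F (j+1)) - gF F (j+1) ≤ A (sigF F j) - gF F j := by
  have hs := stepA hF hd hf h1 h2
  have hg := gF_succ hF (F := F) h1
  have hk := keyge' hF hd hf (j := j+1) (by omega) (by omega)
  omega

end StepA
end WithF

/-! ## Stage A: diamonds ↔ flagged chains -/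

def Supp (k : ℕ) (x : ℕ → ℕ) : Prop := ∀ j, j < 1 ∨ 3*k+1 < j → x j = 0
def ChainP (k : ℕ) (c : ℕ → ℕ) : Prop := ∀ j, 1 ≤ j → j ≤ 3*k → c (j+1) ≤ c j

lemma sigF_out {k : ℕ} {F : Finset ℕ} (hF : F ⊆ Icc 1 k) {j : ℕ}
    (h : j < 1 ∨ 3*k+1 < j) : sigF F j = j := by
  unfold sigF
  rw [if_neg, if_neg]
  · rintro ⟨h1, h2⟩
    have := hFmem hF h2
    omega
  · rintro ⟨h1, h2⟩
    have := hFmem hF h2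
    omega

lemma tOf_out {β : ℕ} (a : Fin β → ℕ) {j : ℕ} (h : j < 1 ∨ β < j) : tOf a j = 0 := by
  unfold tOf
  rw [dif_neg (by omega)]

lemma tOf_of_fun {r : ℕ} (B : ℕ → ℕ) {j : ℕ} (h1 : 1 ≤ j) (h2 : j ≤ r) :
    tOf (fun i : Fin r => B ((i : ℕ) + 1)) j = B j := by
  unfold tOf
  rw [dif_pos ⟨h1, h2⟩]
  show B (j - 1 + 1) = B j
  congr 1
  omega

/-- the flag set computed from a (1-indexed) filling -/
def Ffun (k : ℕ) (A : ℕ → ℕ) : Finset ℕ := (Icc 1 k).filter (fun i => A (3*i-1) < A (3*i))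

lemma Ffun_subset (k : ℕ) (A : ℕ → ℕ) : Ffun k A ⊆ Icc 1 k := Finset.filter_subset _ _

lemma hf_of (k : ℕ) (A : ℕ → ℕ) :
    ∀ m, m < k → (m+1 ∈ Ffun k A ↔ A (3*m+2) < A (3*m+3)) := by
  intro m hm
  unfold Ffun
  rw [Finset.mem_filter, Finset.mem_Icc,
    show 3*(m+1)-1 = 3*m+2 by omega, show 3*(m+1) = 3*m+3 by omega]
  exact ⟨fun h => h.2, fun h => ⟨⟨by omega, by omega⟩, h⟩⟩

lemma hd_of {k : ℕ} {a : Fin (3*k+1) → ℕ} (hDia : IsDiamond k a) :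
    ∀ m, m < k → tOf a (3*m+2) ≤ tOf a (3*m+1) ∧ tOf a (3*m+3) ≤ tOf a (3*m+1) ∧
      tOf a (3*m+4) ≤ tOf a (3*m+2) ∧ tOf a (3*m+4) ≤ tOf a (3*m+3) := by
  intro m hm
  have h4 := hDia m hm
  rw [show 3*m+2 = (3*m+1)+1 by ring, show 3*m+3 = (3*m+2)+1 by ring,
    show 3*m+4 = (3*m+3)+1 by ring, show 3*m+1 = (3*m)+1 by ring,
    tOf_apply a _ (by omega), tOf_apply a _ (by omega),
    tOf_apply a _ (by omega), tOf_apply a _ (by omega)]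
  exact h4

/-- forward chain -/
def cFwd (k : ℕ) (a : Fin (3*k+1) → ℕ) : ℕ → ℕ :=
  fun j => tOf a (sigF (Ffun k (tOf a)) j) - gF (Ffun k (tOf a)) j

section FwdProps
variable {k : ℕ} {a : Fin (3*k+1) → ℕ} (hDia : IsDiamond k a)

lemma cFwd_supp : Supp k (cFwd k a) := by
  intro j hj
  unfold cFwd
  rw [sigF_out (Ffun_subset k (tOf a)) hj, tOf_out a hj]
  omega

include hDia

lemma cFwd_chain : ChainP k (cFwd k a) := fun j h1 h2 =>
  chainA (Ffun_subset k (tOf a)) (hd_of hDia) (hf_of k (tOf a)) h1 h2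

lemma cFwd_add_g {j : ℕ} (h1 : 1 ≤ j) (h2 : j ≤ 3*k+1) :
    cFwd k a j + gF (Ffun k (tOf a)) j = tOf a (sigF (Ffun k (tOf a)) j) := by
  unfold cFwd
  exact Nat.sub_add_cancel (keyge' (Ffun_subset k (tOf a)) (hd_of hDia) (hf_of k (tOf a)) h1 h2)

lemma cFwd_sum {n : ℕ} (hsum : ∑ i, a i = n) :
    (∑ j ∈ Icc 1 (3*k+1), cFwd k a j) + mJ (Ffun k (tOf a)) = n := by
  have h1 : (∑ j ∈ Icc 1 (3*k+1), cFwd k a j) + (∑ j ∈ Icc 1 (3*k+1), gF (Ffun k (tOf a)) j)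
      = ∑ j ∈ Icc 1 (3*k+1), tOf a (sigF (Ffun k (tOf a)) j) := by
    rw [← Finset.sum_add_distrib]
    apply Finset.sum_congr rfl
    intro j hj
    rw [Finset.mem_Icc] at hj
    exact cFwd_add_g hDia hj.1 hj.2
  rw [sum_sigF (Ffun_subset k (tOf a)) rfl, sum_tOf, hsum] at h1
  rw [gF_sum (Ffun_subset k (tOf a)) rfl] at h1
  exact h1

end FwdProps

/-- backward 1-indexed filling -/
def Bbwd (F : Finset ℕ) (c : ℕ → ℕ) : ℕ → ℕ :=
  fun j => c (sigF F j) + gF F (sigF F j)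

def aBwd (k : ℕ) (F : Finset ℕ) (c : ℕ → ℕ) : Fin (3*k+1) → ℕ :=
  fun i => Bbwd F c ((i : ℕ) + 1)

section BwdProps
variable {k : ℕ} {F : Finset ℕ} {c : ℕ → ℕ}
  (hF : F ⊆ Icc 1 k) (hsupp : Supp k c) (hchain : ChainP k c)
include hF hsupp hchain

-- specialized g-steps
omit hsupp hchain in
lemma gF_succ2_mem {m : ℕ} (hm : m+1 ∈ F) (h2 : 1 ≤ m+1) :
    gF F (3*m+2) = gF F (3*m+3) + 1 := by
  have := gF_succ (F := F) (j := 3*m+2) hF (by omega)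
  rw [show 3*m+2+1 = 3*m+3 by ring] at this
  rw [this, if_pos ⟨by omega, by rwa [show (3*m+3)/3 = m+1 by omega]⟩]

omit hsupp hchain in
lemma gF_succ2_not {m : ℕ} (hm : m+1 ∉ F) :
    gF F (3*m+2) = gF F (3*m+3) := by
  have := gF_succ (F := F) (j := 3*m+2) hF (by omega)
  rw [show 3*m+2+1 = 3*m+3 by ring] at this
  rw [this, if_neg, add_zero]
  rw [show (3*m+3)/3 = m+1 by omega]
  exact fun h => hm h.2

omit hF in
lemma chainA' {j : ℕ} (h1 : 1 ≤ j) (h2 : j ≤ 3*k) :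
    c (j+1) + gF F (j+1) ≤ c j + gF F j :=
  Nat.add_le_add (hchain j h1 h2) (gF_anti (by omega))

lemma Bbwd_flag : ∀ m, m < k → (m+1 ∈ F ↔ Bbwd F c (3*m+2) < Bbwd F c (3*m+3)) := by
  intro m hm
  unfold Bbwd
  constructor
  · intro hmem
    rw [sigF_two_mem' hmem, sigF_three_mem' hmem]
    have hg := gF_succ2_mem hF hmem (by omega)
    have hc := hchain (3*m+2) (by omega) (by omega)
    rw [show 3*m+2+1 = 3*m+3 by ring] at hc
    omega
  · intro hlt
    by_contra hmem
    rw [sigF_two_not' hmem, sigF_three_not' hmem] at hlt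
    have hg := gF_succ2_not hF hmem
    have hc := hchain (3*m+2) (by omega) (by omega)
    rw [show 3*m+2+1 = 3*m+3 by ring] at hc
    omega

omit hF in
lemma Bbwd_diamond : ∀ m, m < k →
    Bbwd F c (3*m+2) ≤ Bbwd F c (3*m+1) ∧ Bbwd F c (3*m+3) ≤ Bbwd F c (3*m+1) ∧
    Bbwd F c (3*m+4) ≤ Bbwd F c (3*m+2) ∧ Bbwd F c (3*m+4) ≤ Bbwd F c (3*m+3) := by
  intro m hm
  unfold Bbwd
  have s1 := chainA' (F := F) hsupp hchain (h1 := by omega) (h2 := (by omega : 3*m+1 ≤ 3*k))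
  have s2 := chainA' (F := F) hsupp hchain (h1 := by omega) (h2 := (by omega : 3*m+2 ≤ 3*k))
  have s3 := chainA' (F := F) hsupp hchain (h1 := by omega) (h2 := (by omega : 3*m+3 ≤ 3*k))
  rw [show 3*m+1+1 = 3*m+2 by ring] at s1
  rw [show 3*m+2+1 = 3*m+3 by ring] at s2
  rw [show 3*m+3+1 = 3*m+4 by ring] at s3
  rw [sigF_one' m, show 3*m+4 = 3*(m+1)+1 by ring, sigF_one' (m+1),
    show 3*(m+1)+1 = 3*m+4 by ring]
  by_cases hmem : m+1 ∈ F
  · rw [sigF_two_mem' hmem, sigF_three_mem' hmem]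
    refine ⟨by omega, by omega, by omega, by omega⟩
  · rw [sigF_two_not' hmem, sigF_three_not' hmem]
    refine ⟨by omega, by omega, by omega, by omega⟩

omit hF in
lemma aBwd_diamond : IsDiamond k (aBwd k F c) := by
  intro m hm
  have h4 := Bbwd_diamond (F := F) hsupp hchain m hm
  have e : ∀ (x : ℕ) (h : x < 3*k+1), aBwd k F c ⟨x, h⟩ = Bbwd F c (x+1) := fun x h => rfl
  simp only [e]
  rw [show 3*m+1+1 = 3*m+2 by ring, show 3*m+2+1 = 3*m+3 by ring,
    show 3*m+3+1 = 3*m+4 by ring]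
  exact h4

lemma aBwd_sum {n : ℕ} (hsum : (∑ j ∈ Icc 1 (3*k+1), c j) + mJ F = n) :
    ∑ i, aBwd k F c i = n := by
  unfold aBwd
  rw [← sum_Icc_one (Bbwd F c) (3*k+1)]
  unfold Bbwd
  rw [show (∑ j ∈ Icc 1 (3*k+1), (c (sigF F j) + gF F (sigF F j)))
      = ∑ j ∈ Icc 1 (3*k+1), (c j + gF F j) from sum_sigF hF rfl (fun x => c x + gF F x),
    Finset.sum_add_distrib, gF_sum hF rfl]
  exact hsum

end BwdProps

def T1 (k n : ℕ) := {a : Fin (3*k+1) → ℕ // IsDiamond k a ∧ ∑ i, a i = n}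
def TCh (k n : ℕ) := Σ F : {F : Finset ℕ // F ∈ (Icc 1 k).powerset},
  {c : ℕ → ℕ // Supp k c ∧ ChainP k c ∧ (∑ j ∈ Icc 1 (3*k+1), c j) + mJ F.1 = n}

lemma tOf_aBwd {k : ℕ} (F : Finset ℕ) (c : ℕ → ℕ) {j : ℕ} (h1 : 1 ≤ j) (h2 : j ≤ 3*k+1) :
    tOf (aBwd k F c) j = Bbwd F c j := by
  unfold aBwd
  exact tOf_of_fun _ h1 h2

lemma roundtrip1 {k : ℕ} {a : Fin (3*k+1) → ℕ} (hDia : IsDiamond k a) (i : Fin (3*k+1)) :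
    aBwd k (Ffun k (tOf a)) (cFwd k a) i = a i := by
  have hFs := Ffun_subset k (tOf a)
  have hmem : sigF (Ffun k (tOf a)) ((i:ℕ)+1) ∈ Icc 1 (3*k+1) :=
    sigF_mem hFs rfl (Finset.mem_Icc.mpr ⟨by omega, by omega⟩)
  rw [Finset.mem_Icc] at hmem
  show cFwd k a (sigF (Ffun k (tOf a)) ((i:ℕ)+1))
      + gF (Ffun k (tOf a)) (sigF (Ffun k (tOf a)) ((i:ℕ)+1)) = a i
  rw [cFwd_add_g hDia hmem.1 hmem.2, sigF_invol hFs, tOf_apply a _ i.2, Fin.eta]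

lemma roundtripF {k : ℕ} {F : Finset ℕ} {c : ℕ → ℕ}
    (hF : F ⊆ Icc 1 k) (hsupp : Supp k c) (hchain : ChainP k c) :
    Ffun k (tOf (aBwd k F c)) = F := by
  ext i
  rw [Ffun, Finset.mem_filter, Finset.mem_Icc]
  constructor
  · rintro ⟨⟨hi1, hi2⟩, hlt⟩
    obtain ⟨m, rfl⟩ : ∃ m, i = m+1 := ⟨i-1, by omega⟩
    rw [tOf_aBwd F c (by omega) (by omega), tOf_aBwd F c (by omega) (by omega)] at hlt
    rw [show 3*(m+1)-1 = 3*m+2 by omega, show 3*(m+1) = 3*m+3 by omega] at hlt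
    exact (Bbwd_flag hF hsupp hchain m (by omega)).mpr hlt
  · intro hiF
    have hik := hFmem hF hiF
    obtain ⟨m, rfl⟩ : ∃ m, i = m+1 := ⟨i-1, by omega⟩
    refine ⟨⟨by omega, by omega⟩, ?_⟩
    rw [tOf_aBwd F c (by omega) (by omega), tOf_aBwd F c (by omega) (by omega),
      show 3*(m+1)-1 = 3*m+2 by omega, show 3*(m+1) = 3*m+3 by omega]
    exact (Bbwd_flag hF hsupp hchain m (by omega)).mp hiF

lemma roundtripC {k : ℕ} {F : Finset ℕ} {c : ℕ → ℕ}
    (hF : F ⊆ Icc 1 k) (hsupp : Supp k c) (hchain : ChainP k c) :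
    cFwd k (aBwd k F c) = c := by
  funext j
  by_cases hj : 1 ≤ j ∧ j ≤ 3*k+1
  · unfold cFwd
    rw [roundtripF hF hsupp hchain]
    have hmem : sigF F j ∈ Icc 1 (3*k+1) := sigF_mem hF rfl (Finset.mem_Icc.mpr hj)
    rw [Finset.mem_Icc] at hmem
    rw [tOf_aBwd F c hmem.1 hmem.2]
    show Bbwd F c (sigF F j) - gF F j = c j
    unfold Bbwd
    rw [sigF_invol hF]
    omega
  · rw [cFwd_supp j (by omega), hsupp j (by omega)]

noncomputable def E1 (k n : ℕ) : T1 k n ≃ TCh k n where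
  toFun p := ⟨⟨Ffun k (tOf p.1), Finset.mem_powerset.mpr (Ffun_subset _ _)⟩,
    ⟨cFwd k p.1, cFwd_supp, cFwd_chain p.2.1, cFwd_sum p.2.1 p.2.2⟩⟩
  invFun q := ⟨aBwd k q.1.1 q.2.1,
    aBwd_diamond q.2.2.1 q.2.2.2.1,
    aBwd_sum (Finset.mem_powerset.mp q.1.2) q.2.2.1 q.2.2.2.1 q.2.2.2.2⟩
  left_inv p := Subtype.ext (funext fun i => roundtrip1 p.2.1 i)
  right_inv q := by
    refine sigma_subtype_ext (Subtype.ext ?_) ?_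
    · exact roundtripF (Finset.mem_powerset.mp q.1.2) q.2.2.1 q.2.2.2.1
    · exact roundtripC (Finset.mem_powerset.mp q.1.2) q.2.2.1 q.2.2.2.1

/-! ## Stage B: chains ↔ difference vectors -/

def TX (k n : ℕ) := Σ F : {F : Finset ℕ // F ∈ (Icc 1 k).powerset},
  {x : ℕ → ℕ // Supp k x ∧ (∑ j ∈ Icc 1 (3*k+1), j * x j) + mJ F.1 = n}

def dOf (k : ℕ) (c : ℕ → ℕ) : ℕ → ℕ :=
  fun j => if 1 ≤ j ∧ j ≤ 3*k+1 then c j - c (j+1) else 0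

def pSum (k : ℕ) (x : ℕ → ℕ) : ℕ → ℕ :=
  fun j => if 1 ≤ j ∧ j ≤ 3*k+1 then ∑ j' ∈ Icc j (3*k+1), x j' else 0

section StageB
variable {k : ℕ} {c x : ℕ → ℕ}

lemma chain_all (hsupp : Supp k c) (hchain : ChainP k c) :
    ∀ j, 1 ≤ j → c (j+1) ≤ c j := by
  intro j h1
  rcases lt_or_ge (3*k) j with h | h
  · rw [hsupp (j+1) (by omega)]
    exact Nat.zero_le _
  · exact hchain j h1 h

lemma Icc_insert {j r : ℕ} (h : j ≤ r) : Icc j r = insert j (Icc (j+1) r) := by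
  ext t
  simp only [Finset.mem_insert, Finset.mem_Icc]
  omega

lemma telescope (hsupp : Supp k c) (hchain : ChainP k c) :
    ∀ d j, 1 ≤ j → j + d = 3*k+1 → ∑ j' ∈ Icc j (3*k+1), dOf k c j' = c j := by
  intro d
  induction d with
  | zero =>
    intro j h1 h2
    obtain rfl : j = 3*k+1 := by omega
    rw [Finset.Icc_self, Finset.sum_singleton]
    unfold dOf
    rw [if_pos ⟨h1, le_refl _⟩, hsupp (3*k+1+1) (by omega)]
    omega
  | succ d ih =>
    intro j h1 h2
    rw [Icc_insert (by omega), Finset.sum_insert (by simp [Finset.mem_Icc]),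
      ih (j+1) (by omega) (by omega)]
    unfold dOf
    rw [if_pos ⟨h1, by omega⟩]
    have := chain_all hsupp hchain j h1
    omega

lemma triangular (x : ℕ → ℕ) :
    ∑ j ∈ Icc 1 (3*k+1), ∑ j' ∈ Icc j (3*k+1), x j' = ∑ j ∈ Icc 1 (3*k+1), j * x j := by
  rw [← Finset.sum_sigma (Icc 1 (3*k+1)) (fun j => Icc j (3*k+1)) (fun p => x p.2)]
  have h2 : ∀ j ∈ Icc 1 (3*k+1), j * x j = ∑ _j' ∈ Icc 1 j, x j := by
    intro j _
    rw [Finset.sum_const, Nat.card_Icc, smul_eq_mul]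
    congr 1
  rw [Finset.sum_congr rfl h2,
    ← Finset.sum_sigma (Icc 1 (3*k+1)) (fun j => Icc 1 j) (fun p => x p.1)]
  apply Finset.sum_nbij' (i := fun p => (⟨p.2, p.1⟩ : Σ _j : ℕ, ℕ))
    (j := fun p => (⟨p.2, p.1⟩ : Σ _j : ℕ, ℕ))
  · intro p hp
    simp only [Finset.mem_sigma, Finset.mem_Icc] at hp ⊢
    omega
  · intro p hp
    simp only [Finset.mem_sigma, Finset.mem_Icc] at hp ⊢
    omega
  · intro p _; rfl
  · intro p _; rfl
  · intro p _; rfl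

lemma dOf_supp : Supp k (dOf k c) := by
  intro j hj
  unfold dOf
  rw [if_neg (by omega)]

lemma dOf_sum (hsupp : Supp k c) (hchain : ChainP k c) :
    ∑ j ∈ Icc 1 (3*k+1), j * dOf k c j = ∑ j ∈ Icc 1 (3*k+1), c j := by
  rw [← triangular (dOf k c)]
  apply Finset.sum_congr rfl
  intro j hj
  rw [Finset.mem_Icc] at hj
  exact telescope hsupp hchain (3*k+1-j) j hj.1 (by omega)

lemma pSum_supp : Supp k (pSum k x) := by
  intro j hj
  unfold pSum
  rw [if_neg (by omega)]

lemma pSum_chain : ChainP k (pSum k x) := by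
  intro j h1 h2
  unfold pSum
  rw [if_pos ⟨by omega, by omega⟩, if_pos ⟨by omega, by omega⟩]
  apply Finset.sum_le_sum_of_subset
  intro t ht
  simp only [Finset.mem_Icc] at ht ⊢
  omega

lemma pSum_sum : ∑ j ∈ Icc 1 (3*k+1), pSum k x j = ∑ j ∈ Icc 1 (3*k+1), j * x j := by
  rw [← triangular x]
  apply Finset.sum_congr rfl
  intro j hj
  rw [Finset.mem_Icc] at hj
  unfold pSum
  rw [if_pos ⟨hj.1, hj.2⟩]

lemma pSum_dOf (hsupp : Supp k c) (hchain : ChainP k c) : pSum k (dOf k c) = c := by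
  funext j
  unfold pSum
  by_cases hj : 1 ≤ j ∧ j ≤ 3*k+1
  · rw [if_pos hj]
    exact telescope hsupp hchain (3*k+1-j) j hj.1 (by omega)
  · rw [if_neg hj, hsupp j (by omega)]

lemma dOf_pSum (hsupp : Supp k x) : dOf k (pSum k x) = x := by
  funext j
  unfold dOf pSum
  by_cases hj : 1 ≤ j ∧ j ≤ 3*k+1
  · rw [if_pos hj, if_pos hj]
    by_cases hr : j = 3*k+1
    · subst hr
      rw [if_neg (by omega), Finset.Icc_self, Finset.sum_singleton]
      omega
    · rw [if_pos ⟨by omega, by omega⟩, Icc_insert (by omega),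
        Finset.sum_insert (by simp [Finset.mem_Icc])]
      omega
  · rw [if_neg hj, hsupp j (by omega)]

end StageB

noncomputable def E2 (k n : ℕ) : TCh k n ≃ TX k n :=
  Equiv.sigmaCongrRight (fun F =>
    { toFun := fun p => ⟨dOf k p.1, dOf_supp, by
        rw [dOf_sum p.2.1 p.2.2.1]; exact p.2.2.2
        ⟩
      invFun := fun q => ⟨pSum k q.1, pSum_supp, pSum_chain, by
        rw [pSum_sum]; exact q.2.2⟩
      left_inv := fun p => Subtype.ext (pSum_dOf p.2.1 p.2.2.1)
      right_inv := fun q => Subtype.ext (dOf_pSum q.2.1) })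

/-! ## Stage C: merging small flags into doubled parts -/

def wK : ℕ → ℕ := fun j => if j % 6 = 4 then j / 2 else j

def TM (k n : ℕ) := Σ J : {J : Finset ℕ // J ∈ (Icc (alphaK k + 1) k).powerset},
  {y : ℕ → ℕ // Supp k y ∧ (∑ j ∈ Icc 1 (3*k+1), wK j * y j) + mJ J.1 = n}

def mrg (k : ℕ) (F : Finset ℕ) (x : ℕ → ℕ) : ℕ → ℕ := fun j =>
  if j % 6 = 4 ∧ j ≤ 3*k+1 then 2 * x j + (if (j+2)/6 ∈ F then 1 else 0) else x j

def hlv (k : ℕ) (y : ℕ → ℕ) : ℕ → ℕ := fun j =>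
  if j % 6 = 4 ∧ j ≤ 3*k+1 then y j / 2 else y j

section StageC
variable {k : ℕ} {F : Finset ℕ} {x y : ℕ → ℕ}

lemma alpha_bound {i : ℕ} (h : 1 ≤ i) : 6*i-2 ≤ 3*k+1 ↔ i ≤ alphaK k := by
  unfold alphaK
  omega

lemma mJ_split (F : Finset ℕ) :
    mJ F = mJ (F.filter (fun i => alphaK k + 1 ≤ i)) + mJ (F.filter (fun i => i ≤ alphaK k)) := by
  unfold mJ
  rw [← Finset.sum_filter_add_sum_filter_not F (fun i => alphaK k + 1 ≤ i)]
  congr 1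
  apply Finset.sum_congr _ (fun _ _ => rfl)
  apply Finset.filter_congr
  intro i _
  simp only [not_le, eq_iff_iff]
  omega

lemma mrg_supp (hsupp : Supp k x) : Supp k (mrg k F x) := by
  intro j hj
  unfold mrg
  rcases hj with hj | hj
  · rw [if_neg (by omega), hsupp j (by omega)]
  · rw [if_neg (by omega), hsupp j (by omega)]

lemma hlv_supp (hsupp : Supp k y) : Supp k (hlv k y) := by
  intro j hj
  unfold hlv
  rcases hj with hj | hj
  · rw [if_neg (by omega), hsupp j (by omega)]
  · rw [if_neg (by omega), hsupp j (by omega)]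

lemma hlv_mrg : hlv k (mrg k F x) = x := by
  funext j
  unfold hlv mrg
  by_cases hc : j % 6 = 4 ∧ j ≤ 3*k+1
  · rw [if_pos hc, if_pos hc]
    by_cases hm : (j+2)/6 ∈ F <;> [rw [if_pos hm]; rw [if_neg hm]] <;> omega
  · rw [if_neg hc, if_neg hc]

lemma mrg_mod {i : ℕ} (h1 : 1 ≤ i) (h2 : i ≤ alphaK k) :
    mrg k F x (6*i-2) % 2 = (if i ∈ F then 1 else 0) := by
  unfold mrg
  rw [if_pos ⟨by omega, (alpha_bound h1).mpr h2⟩, show (6*i-2+2)/6 = i by omega]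
  by_cases hm : i ∈ F <;> [rw [if_pos hm]; rw [if_neg hm]] <;> omega

lemma sumC (hF : F ⊆ Icc 1 k) (x : ℕ → ℕ) :
    ∑ j ∈ Icc 1 (3*k+1), wK j * mrg k F x j
      = (∑ j ∈ Icc 1 (3*k+1), j * x j) + mJ (F.filter (fun i => i ≤ alphaK k)) := by
  have hterm : ∀ j ∈ Icc 1 (3*k+1), wK j * mrg k F x j
      = j * x j + (if j % 6 = 4 ∧ (j+2)/6 ∈ F then j/2 else 0) := by
    intro j hj
    rw [Finset.mem_Icc] at hj
    unfold wK mrg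
    by_cases h6 : j % 6 = 4
    · rw [if_pos h6, if_pos (show j % 6 = 4 ∧ j ≤ 3*k+1 from ⟨h6, hj.2⟩)]
      by_cases hm : (j+2)/6 ∈ F
      · rw [if_pos (show j % 6 = 4 ∧ (j+2)/6 ∈ F from ⟨h6, hm⟩), if_pos hm]
        have hj2 : j / 2 * 2 = j := by omega
        calc j/2 * (2 * x j + 1) = (j/2 * 2) * x j + j/2 := by ring
        _ = j * x j + j/2 := by rw [hj2]
      · rw [if_neg (show ¬(j % 6 = 4 ∧ (j+2)/6 ∈ F) from fun hh => hm hh.2), if_neg hm, add_zero, add_zero]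
        have hj2 : j / 2 * 2 = j := by omega
        calc j/2 * (2 * x j) = (j/2 * 2) * x j := by ring
        _ = j * x j := by rw [hj2]
    · rw [if_neg h6, if_neg (show ¬(j % 6 = 4 ∧ j ≤ 3*k+1) from fun hh => h6 hh.1),
        if_neg (show ¬(j % 6 = 4 ∧ (j+2)/6 ∈ F) from fun hh => h6 hh.1), add_zero]
  rw [Finset.sum_congr rfl hterm, Finset.sum_add_distrib]
  congr 1
  rw [← Finset.sum_filter]
  unfold mJ
  apply Finset.sum_nbij' (i := fun j => (j+2)/6) (j := fun i => 6*i-2)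
  · intro j hj
    simp only [Finset.mem_filter, Finset.mem_Icc] at hj ⊢
    obtain ⟨⟨hj1, hj2⟩, hj4, hjm⟩ := hj
    refine ⟨hjm, ?_⟩
    have : 6 * ((j+2)/6) - 2 = j := by omega
    rw [← alpha_bound (by omega)]
    omega
  · intro i hi
    simp only [Finset.mem_filter, Finset.mem_Icc] at hi ⊢
    obtain ⟨hiF, hia⟩ := hi
    have hik := hFmem hF hiF
    have hb := (alpha_bound (k := k) (i := i) (by omega)).mpr hia
    refine ⟨⟨by omega, hb⟩, by omega, ?_⟩
    rw [show (6*i-2+2)/6 = i by omega]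
    exact hiF
  · intro j hj
    simp only [Finset.mem_filter, Finset.mem_Icc] at hj
    omega
  · intro i hi
    simp only [Finset.mem_filter, Finset.mem_Icc] at hi
    have hik := hFmem hF hi.1
    omega
  · intro j hj
    simp only [Finset.mem_filter, Finset.mem_Icc] at hj
    omega

lemma F_recomp (hF : F ⊆ Icc 1 k) :
    (F.filter (fun i => alphaK k + 1 ≤ i)) ∪ ((Icc 1 (alphaK k)).filter (fun i => i ∈ F)) = F := by
  ext i
  simp only [Finset.mem_union, Finset.mem_filter, Finset.mem_Icc]
  constructor
  · rintro (⟨h, -⟩ | ⟨-, h⟩) <;> exact h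
  · intro hiF
    have := hFmem hF hiF
    by_cases hc : alphaK k + 1 ≤ i
    · exact Or.inl ⟨hiF, hc⟩
    · exact Or.inr ⟨⟨by omega, by omega⟩, hiF⟩

lemma J_recomp {J L' : Finset ℕ} (hJ : J ⊆ Icc (alphaK k + 1) k) (hL' : L' ⊆ Icc 1 (alphaK k)) :
    (J ∪ L').filter (fun i => alphaK k + 1 ≤ i) = J := by
  ext i
  simp only [Finset.mem_filter, Finset.mem_union]
  constructor
  · rintro ⟨hJL | hL, hge⟩
    · exact hJL
    · have := hL' hL
      rw [Finset.mem_Icc] at this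
      omega
  · intro hiJ
    have := hJ hiJ
    rw [Finset.mem_Icc] at this
    exact ⟨Or.inl hiJ, this.1⟩

lemma mrg_hlv {J L' : Finset ℕ} (hJ : J ⊆ Icc (alphaK k + 1) k)
    (hL' : L' = (Icc 1 (alphaK k)).filter (fun i => y (6*i-2) % 2 = 1)) :
    mrg k (J ∪ L') (hlv k y) = y := by
  funext j
  unfold mrg hlv
  by_cases hc : j % 6 = 4 ∧ j ≤ 3*k+1
  · rw [if_pos hc, if_pos hc]
    set i := (j+2)/6 with hi
    have hj6 : 6*i-2 = j := by omega
    have hi1 : 1 ≤ i := by omega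
    have hia : i ≤ alphaK k := by rw [← alpha_bound hi1]; omega
    have hiJ : i ∉ J := fun hmem => by
      have := hJ hmem; rw [Finset.mem_Icc] at this; omega
    have hmem_iff : i ∈ J ∪ L' ↔ y j % 2 = 1 := by
      rw [Finset.mem_union, hL', Finset.mem_filter, Finset.mem_Icc, hj6]
      constructor
      · rintro (h | h)
        · exact absurd h hiJ
        · exact h.2
      · intro h
        exact Or.inr ⟨⟨hi1, hia⟩, h⟩
    by_cases hp : y j % 2 = 1
    · rw [if_pos (hmem_iff.mpr hp)]
      omega
    · rw [if_neg (fun hh => hp (hmem_iff.mp hh))]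
      omega
  · rw [if_neg hc, if_neg hc]
end StageC

noncomputable def E3 (k n : ℕ) : TX k n ≃ TM k n where
  toFun p := ⟨⟨p.1.1.filter (fun i => alphaK k + 1 ≤ i), Finset.mem_powerset.mpr (by
      intro i hi
      rw [Finset.mem_filter] at hi
      have := hFmem (Finset.mem_powerset.mp p.1.2) hi.1
      rw [Finset.mem_Icc]
      exact ⟨hi.2, this.2⟩)⟩,
    ⟨mrg k p.1.1 p.2.1, mrg_supp p.2.2.1, by
      have hs := p.2.2.2
      have h5 := mJ_split (k := k) p.1.1
      have h6 := sumC (Finset.mem_powerset.mp p.1.2) p.2.1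
      dsimp only
      omega⟩⟩
  invFun q := by
    refine ⟨⟨q.1.1 ∪ (Icc 1 (alphaK k)).filter (fun i => q.2.1 (6*i-2) % 2 = 1),
      Finset.mem_powerset.mpr ?_⟩,
      ⟨hlv k q.2.1, hlv_supp q.2.2.1, ?_⟩⟩
    · intro i hi
      rw [Finset.mem_union] at hi
      rw [Finset.mem_Icc]
      rcases hi with hi | hi
      · have := Finset.mem_powerset.mp q.1.2 hi
        rw [Finset.mem_Icc] at this
        omega
      · rw [Finset.mem_filter, Finset.mem_Icc] at hi
        have : alphaK k = (k+1)/2 := rfl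
        omega
    · have hJ := Finset.mem_powerset.mp q.1.2
      have h9 : mrg k (q.1.1 ∪ (Icc 1 (alphaK k)).filter (fun i => q.2.1 (6*i-2) % 2 = 1))
          (hlv k q.2.1) = q.2.1 := mrg_hlv hJ rfl
      have hFsub : (q.1.1 ∪ (Icc 1 (alphaK k)).filter (fun i => q.2.1 (6*i-2) % 2 = 1)) ⊆ Icc 1 k := by
        intro i hi
        rw [Finset.mem_union] at hi
        rw [Finset.mem_Icc]
        rcases hi with hi | hi
        · have := hJ hi
          rw [Finset.mem_Icc] at this
          omega
        · rw [Finset.mem_filter, Finset.mem_Icc] at hi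
          have : alphaK k = (k+1)/2 := rfl
          omega
      have h2 := sumC hFsub (hlv k q.2.1)
      rw [h9] at h2
      have h3 := mJ_split (k := k) (q.1.1 ∪ (Icc 1 (alphaK k)).filter (fun i => q.2.1 (6*i-2) % 2 = 1))
      rw [J_recomp hJ (Finset.filter_subset _ _)] at h3
      have h4 := q.2.2.2
      dsimp only
      omega
  left_inv p := by
    refine sigma_subtype_ext (Subtype.ext ?_) hlv_mrg
    show (p.1.1.filter (fun i => alphaK k + 1 ≤ i)) ∪
        (Icc 1 (alphaK k)).filter (fun i => mrg k p.1.1 p.2.1 (6*i-2) % 2 = 1) = p.1.1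
    have he : (Icc 1 (alphaK k)).filter (fun i => mrg k p.1.1 p.2.1 (6*i-2) % 2 = 1)
        = (Icc 1 (alphaK k)).filter (fun i => i ∈ p.1.1) := by
      apply Finset.filter_congr
      intro i hi
      rw [Finset.mem_Icc] at hi
      rw [mrg_mod hi.1 hi.2]
      by_cases hm : i ∈ p.1.1
      · simp [hm]
      · simp [hm]
    rw [he]
    exact F_recomp (Finset.mem_powerset.mp p.1.2)
  right_inv q := by
    refine sigma_subtype_ext (Subtype.ext ?_) (mrg_hlv (Finset.mem_powerset.mp q.1.2) rfl)
    show ((q.1.1 ∪ (Icc 1 (alphaK k)).filter (fun i => q.2.1 (6*i-2) % 2 = 1)).filter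
        (fun i => alphaK k + 1 ≤ i)) = q.1.1
    exact J_recomp (Finset.mem_powerset.mp q.1.2) (Finset.filter_subset _ _)

lemma wK_pos {j : ℕ} (h : 1 ≤ j) : 1 ≤ wK j := by
  unfold wK
  split_ifs <;> omega

instance fibFinite (k n m : ℕ) :
    Finite {y : ℕ → ℕ // Supp k y ∧ (∑ j ∈ Icc 1 (3*k+1), wK j * y j) + m = n} := by
  have hb : ∀ (y : {y : ℕ → ℕ // Supp k y ∧ (∑ j ∈ Icc 1 (3*k+1), wK j * y j) + m = n})
      (t : Fin (3*k+2)), y.1 (t : ℕ) < n + 1 := by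
    intro y t
    by_cases ht : 1 ≤ (t : ℕ) ∧ (t : ℕ) ≤ 3*k+1
    · have h1 : wK (t : ℕ) * y.1 (t : ℕ) ≤ ∑ j ∈ Icc 1 (3*k+1), wK j * y.1 j :=
        Finset.single_le_sum (f := fun j => wK j * y.1 j) (fun j _ => Nat.zero_le _)
          (Finset.mem_Icc.mpr ht)
      have h2 := wK_pos ht.1
      have h3 := y.2.2
      have h4 : y.1 (t : ℕ) ≤ wK (t : ℕ) * y.1 (t : ℕ) := Nat.le_mul_of_pos_left _ (by omega)
      omega
    · rw [y.2.1 _ (by omega)]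
      omega
  apply Finite.of_injective (fun y => fun t : Fin (3*k+2) => (⟨y.1 (t : ℕ), hb y t⟩ : Fin (n+1)))
  intro y1 y2 h
  apply Subtype.ext
  funext j
  by_cases hj : j ≤ 3*k+1
  · have := congrFun h ⟨j, by omega⟩
    exact congrArg Fin.val this
  · rw [y1.2.1 j (by omega), y2.2.1 j (by omega)]

lemma seqA_wK (k : ℕ) (i : Fin (3*k+1)) : seqA k i = wK ((i : ℕ) + 1) := rfl

lemma card_fibM (k n m : ℕ) :
    Nat.card {y : ℕ → ℕ // Supp k y ∧ (∑ j ∈ Icc 1 (3*k+1), wK j * y j) + m = n}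
      = if m ≤ n then rp (seqA k) (n - m) else 0 := by
  by_cases hm : m ≤ n
  · rw [if_pos hm]
    unfold rp
    apply Nat.card_congr
    refine { toFun := fun y => ⟨fun i => y.1 ((i : ℕ) + 1), ?_⟩,
             invFun := fun x => ⟨tOf x.1, fun j hj => tOf_out x.1 (by omega), ?_⟩,
             left_inv := ?_, right_inv := ?_ }
    · have hs := y.2.2
      rw [sum_Icc_one (fun j => wK j * y.1 j) (3*k+1)] at hs
      rw [show (∑ i : Fin (3*k+1), seqA k i * y.1 ((i : ℕ)+1))
        = ∑ i : Fin (3*k+1), wK ((i : ℕ)+1) * y.1 ((i : ℕ)+1) from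
          Finset.sum_congr rfl fun i _ => by rw [seqA_wK]]
      omega
    · have hx := x.2
      rw [sum_Icc_one (fun j => wK j * tOf x.1 j) (3*k+1)]
      rw [show (∑ i : Fin (3*k+1), wK ((i : ℕ)+1) * tOf x.1 ((i : ℕ)+1))
        = ∑ i : Fin (3*k+1), seqA k i * x.1 i from
          Finset.sum_congr rfl fun i _ => by rw [seqA_wK, tOf_apply x.1 _ i.2, Fin.eta]]
      omega
    · intro y
      apply Subtype.ext
      funext j
      show tOf (fun i : Fin (3*k+1) => y.1 ((i : ℕ) + 1)) j = y.1 j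
      by_cases hj : 1 ≤ j ∧ j ≤ 3*k+1
      · exact tOf_of_fun _ hj.1 hj.2
      · rw [tOf_out _ (by omega), y.2.1 j (by omega)]
    · intro x
      apply Subtype.ext
      funext i
      show tOf x.1 ((i : ℕ) + 1) = x.1 i
      rw [tOf_apply x.1 _ i.2, Fin.eta]
  · rw [if_neg hm]
    have : IsEmpty {y : ℕ → ℕ // Supp k y ∧ (∑ j ∈ Icc 1 (3*k+1), wK j * y j) + m = n} :=
      ⟨fun y => by have := y.2.2; omega⟩
    exact Nat.card_of_isEmpty


/-- `D_k(n) = ∑_{J ⊆ {α_k+1,…,k}} p_{a[k]}(n − m_J)`, where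
`p_{a[k]}(n − m_J) = 0` when `n < m_J`. -/
theorem stmt0 (k : ℕ) (hk : 1 ≤ k) (n : ℕ) :
    ppD k n = ∑ J ∈ (Finset.Icc (alphaK k + 1) k).powerset,
      (if mJ J ≤ n then rp (seqA k) (n - mJ J) else 0) := by
  have h1 : ppD k n = Nat.card (TM k n) :=
    Nat.card_congr (((E1 k n).trans (E2 k n)).trans (E3 k n))
  rw [h1]
  have h2 : Nat.card (TM k n)
      = ∑ i : {J : Finset ℕ // J ∈ (Icc (alphaK k + 1) k).powerset},
        Nat.card {y : ℕ → ℕ // Supp k y ∧ (∑ j ∈ Icc 1 (3*k+1), wK j * y j) + mJ i.1 = n} :=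
    card_sigma' _
  rw [h2]
  have h3 : (∑ i : {J : Finset ℕ // J ∈ (Icc (alphaK k + 1) k).powerset},
        Nat.card {y : ℕ → ℕ // Supp k y ∧ (∑ j ∈ Icc 1 (3*k+1), wK j * y j) + mJ i.1 = n})
      = ∑ i : {J : Finset ℕ // J ∈ (Icc (alphaK k + 1) k).powerset},
        (if mJ i.1 ≤ n then rp (seqA k) (n - mJ i.1) else 0) := by
    exact Fintype.sum_congr _ _ (fun i => card_fibM k n (mJ i.1))
  rw [h3]
  exact Finset.sum_coe_sort ((Icc (alphaK k + 1) k).powerset)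
    (fun J => if mJ J ≤ n then rp (seqA k) (n - mJ J) else 0)
end

section
/- For every positive integer k, the map φ_k : B_k → A_k defined by φ_k(j) = j + ⌈(j−3)/5⌉ is well defined (i.e., maps B_k into A_k) and bijective, and its inverse is the map ψ_k : A_k → B_k defined by ψ_k(j) = j − ⌈(j−3)/6⌉. -/
open Finset

lemma ceil_bd (m : ℤ) (n : ℕ) (hn : 0 < n) :
    m - 3 ≤ (n : ℤ) * ⌈((m : ℚ) - 3) / (n : ℚ)⌉ ∧
    (n : ℤ) * ⌈((m : ℚ) - 3) / (n : ℚ)⌉ < m - 3 + n := by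
  have hn' : (0 : ℚ) < (n : ℚ) := by exact_mod_cast hn
  constructor
  · have h1 := Int.le_ceil (((m : ℚ) - 3) / n)
    rw [div_le_iff₀ hn'] at h1
    have : (m : ℚ) - 3 ≤ (n : ℚ) * ⌈((m : ℚ) - 3) / (n : ℚ)⌉ := by linarith
    exact_mod_cast this
  · have h2 := Int.ceil_lt_add_one (((m : ℚ) - 3) / n)
    have h3 : ((⌈((m : ℚ) - 3) / (n : ℚ)⌉ : ℚ) - 1) * n < (m : ℚ) - 3 := by
      rw [← lt_div_iff₀ hn']; linarith
    have h4 : (n : ℚ) * (⌈((m : ℚ) - 3) / (n : ℚ)⌉ : ℚ) < (m : ℚ) - 3 + n := by nlinarith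
    exact_mod_cast h4

/-- `φ_k(j) = j + ⌈(j−3)/5⌉` maps `B_k = {1,…,β_k}` bijectively onto
`A_k = {1 ≤ j ≤ 3k+1 : j ≢ 4 (mod 6)}`, with inverse `ψ_k(j) = j − ⌈(j−3)/6⌉`. -/
theorem stmt3 (k : ℕ) (hk : 1 ≤ k) :
    let Bk : Finset ℤ := Finset.Icc 1 (betaK k : ℤ)
    let Ak : Finset ℤ := (Finset.Icc 1 (3 * (k : ℤ) + 1)).filter (fun j => j % 6 ≠ 4)
    let phi : ℤ → ℤ := fun j => j + ⌈((j : ℚ) - 3) / 5⌉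
    let psi : ℤ → ℤ := fun j => j - ⌈((j : ℚ) - 3) / 6⌉
    (∀ j ∈ Bk, phi j ∈ Ak) ∧ (∀ j ∈ Ak, psi j ∈ Bk) ∧
    (∀ j ∈ Bk, psi (phi j) = j) ∧ (∀ j ∈ Ak, phi (psi j) = j) := by
  intro Bk Ak phi psi
  have hb : (k % 2 = 1 ∧ 2 * betaK k = 5 * k + 1) ∨
      (k % 2 = 0 ∧ 2 * betaK k = 5 * k + 2) := by
    unfold betaK alphaK; split <;> omega
  have c5 : ∀ m : ℤ, m - 3 ≤ 5 * ⌈((m : ℚ) - 3) / 5⌉ ∧ 5 * ⌈((m : ℚ) - 3) / 5⌉ < m + 2 := by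
    intro m
    have := ceil_bd m 5 (by norm_num)
    push_cast at this ⊢
    exact ⟨this.1, by linarith [this.2]⟩
  have c6 : ∀ m : ℤ, m - 3 ≤ 6 * ⌈((m : ℚ) - 3) / 6⌉ ∧ 6 * ⌈((m : ℚ) - 3) / 6⌉ < m + 3 := by
    intro m
    have := ceil_bd m 6 (by norm_num)
    push_cast at this ⊢
    exact ⟨this.1, by linarith [this.2]⟩
  refine ⟨?_, ?_, ?_, ?_⟩
  · intro j hj
    simp only [Bk, Finset.mem_Icc] at hj
    simp only [Ak, phi, Finset.mem_filter, Finset.mem_Icc]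
    have h1 := c5 j
    omega
  · intro j hj
    simp only [Ak, Finset.mem_filter, Finset.mem_Icc] at hj
    simp only [Bk, psi, Finset.mem_Icc]
    have h1 := c6 j
    omega
  · intro j hj
    simp only [Bk, Finset.mem_Icc] at hj
    simp only [phi, psi]
    have h1 := c5 j
    have h2 := c6 (j + ⌈((j : ℚ) - 3) / 5⌉)
    omega
  · intro j hj
    simp only [Ak, Finset.mem_filter, Finset.mem_Icc] at hj
    simp only [phi, psi]
    have h1 := c6 j
    have h2 := c5 (j - ⌈((j : ℚ) - 3) / 6⌉)
    omega
end

section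
/- For every nonnegative integer n, D_1(n) = p_{(1,2,2,3)}(n); that is, the number of quadruples (a_1,a_2,a_3,a_4) of nonnegative integers with a_1+a_2+a_3+a_4 = n, a_1 ≥ a_2, a_1 ≥ a_3, a_2 ≥ a_4 and a_3 ≥ a_4 equals the number of quadruples (x_1,x_2,x_3,x_4) of nonnegative integers with x_1 + 2x_2 + 2x_3 + 3x_4 = n. -/
open Finset

/-- `D_1(n) = p_{(1,2,2,3)}(n)` for all `n ≥ 0`. -/
theorem stmt6 (n : ℕ) : ppD 1 n = rp (![1, 2, 2, 3] : Fin 4 → ℕ) n := by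
  have ext4 : ∀ v w : Fin 4 → ℕ, v 0 = w 0 → v 1 = w 1 → v 2 = w 2 → v 3 = w 3 →
      v = w := by
    intro v w h0 h1 h2 h3
    funext i
    fin_cases i
    · exact h0
    · exact h1
    · exact h2
    · exact h3
  have key : ∀ a : Fin 4 → ℕ, IsDiamond 1 a ↔
      (a 1 ≤ a 0 ∧ a 2 ≤ a 0 ∧ a 3 ≤ a 1 ∧ a 3 ≤ a 2) := by
    intro a
    constructor
    · intro h; exact h 0 one_pos
    · intro h i hi
      interval_cases i
      exact h
  have sum4 : ∀ a : Fin 4 → ℕ, ∑ i, a i = a 0 + a 1 + a 2 + a 3 := fun a =>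
    Fin.sum_univ_four a
  unfold ppD rp
  apply Nat.card_congr
  refine Equiv.ofBijective (fun p : {a : Fin 4 → ℕ // IsDiamond 1 a ∧ ∑ i, a i = n} =>
    (⟨![p.1 0 - max (p.1 1) (p.1 2), p.1 3 + (p.1 2 - p.1 1),
        p.1 3 + (p.1 1 - p.1 2), min (p.1 1) (p.1 2) - p.1 3], ?_⟩ :
      {x : Fin 4 → ℕ // ∑ i, (![1,2,2,3] : Fin 4 → ℕ) i * x i = n})) ⟨?_, ?_⟩
  · obtain ⟨a, hd, hs⟩ := p
    rw [key] at hd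
    rw [sum4] at hs
    simp only [Fin.sum_univ_four, Matrix.cons_val_zero, Matrix.cons_val_one,
      Matrix.head_cons, Matrix.cons_val_two, Matrix.tail_cons, Matrix.cons_val_three]
    omega
  · rintro ⟨a, ha, hsa⟩ ⟨b, hb, hsb⟩ hab
    simp only [Subtype.mk.injEq] at hab ⊢
    rw [key] at ha
    rw [key] at hb
    have e0 := congrFun hab 0
    have e1 := congrFun hab 1
    have e2 := congrFun hab 2
    have e3 := congrFun hab 3
    simp only [Matrix.cons_val_zero, Matrix.cons_val_one, Matrix.head_cons,
      Matrix.cons_val_two, Matrix.tail_cons, Matrix.cons_val_three] at e0 e1 e2 e3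
    exact ext4 a b (by omega) (by omega) (by omega) (by omega)
  · rintro ⟨x, hx⟩
    simp only [Fin.sum_univ_four, Matrix.cons_val_zero, Matrix.cons_val_one,
      Matrix.head_cons, Matrix.cons_val_two, Matrix.tail_cons,
      Matrix.cons_val_three] at hx
    refine ⟨⟨![max (x 1) (x 2) + x 3 + x 0,
        min (x 1) (x 2) + x 3 + (x 2 - x 1),
        min (x 1) (x 2) + x 3 + (x 1 - x 2), min (x 1) (x 2)], ?_, ?_⟩, ?_⟩
    · rw [key]
      simp only [Matrix.cons_val_zero, Matrix.cons_val_one, Matrix.head_cons,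
        Matrix.cons_val_two, Matrix.tail_cons, Matrix.cons_val_three]
      omega
    · rw [sum4]
      simp only [Matrix.cons_val_zero, Matrix.cons_val_one, Matrix.head_cons,
        Matrix.cons_val_two, Matrix.tail_cons, Matrix.cons_val_three]
      omega
    · apply Subtype.ext
      refine ext4 _ _ ?_ ?_ ?_ ?_ <;>
        simp only [Matrix.cons_val_zero, Matrix.cons_val_one, Matrix.head_cons,
          Matrix.cons_val_two, Matrix.tail_cons, Matrix.cons_val_three] <;>
        omega
end

section
/- For every positive integer k, the following identity of formal power series in q holds: ( Σ_{n=0}^{∞} D_k(n) q^n ) · ∏_{i=1}^{3k+1} (1 − q^i) = ∏_{i=1}^{k} (1 + q^{3i−1}). -/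
open Finset

section PPDproof
open Finset



namespace PPD

/-- support condition -/
def suppIn (s : Finset ℕ) (x : ℕ → ℕ) : Prop := ∀ i, i ∉ s → x i = 0

def wt (s : Finset ℕ) (x : ℕ → ℕ) : ℕ := ∑ i ∈ s, i * x i

/-- number of partitions of n with parts in s -/
noncomputable def cS (s : Finset ℕ) (n : ℕ) : ℕ :=
  Nat.card {x : ℕ → ℕ // suppIn s x ∧ wt s x = n}

lemma le_of_mem_wt {s : Finset ℕ} (hs : ∀ i ∈ s, 1 ≤ i) {x : ℕ → ℕ} {n : ℕ}
    (hw : wt s x = n) {i : ℕ} (hi : i ∈ s) : x i ≤ n := by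
  have h1 : i * x i ≤ n := hw ▸ Finset.single_le_sum (f := fun i => i * x i)
    (fun j _ => Nat.zero_le _) hi
  have := hs i hi
  nlinarith

lemma finite_cS (s : Finset ℕ) (hs : ∀ i ∈ s, 1 ≤ i) (n : ℕ) :
    Finite {x : ℕ → ℕ // suppIn s x ∧ wt s x = n} := by
  apply Finite.of_injective (f := fun (x : {x : ℕ → ℕ // suppIn s x ∧ wt s x = n}) =>
    (fun i : s => (⟨min (x.1 i) n, by omega⟩ : Fin (n+1))))
  intro x y h
  apply Subtype.ext; funext i
  by_cases hi : i ∈ s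
  · have := congrFun h ⟨i, hi⟩
    simp only [Fin.mk.injEq] at this
    have hxn := le_of_mem_wt hs x.2.2 hi
    have hyn := le_of_mem_wt hs y.2.2 hi
    omega
  · rw [x.2.1 i hi, y.2.1 i hi]

lemma cS_empty (n : ℕ) : cS ∅ n = if n = 0 then 1 else 0 := by
  unfold cS
  split_ifs with h
  · subst h
    rw [Nat.card_eq_one_iff_unique]
    constructor
    · constructor
      rintro ⟨x, hx, _⟩ ⟨y, hy, _⟩
      apply Subtype.ext; funext i
      show x i = y i
      rw [hx i (by simp), hy i (by simp)]
    · exact ⟨⟨fun _ => 0, fun i _ => rfl, by simp [wt]⟩⟩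
  · rw [Nat.card_eq_zero]
    left
    constructor
    rintro ⟨x, hx, hw⟩
    exact h (by simpa [wt] using hw.symm)

lemma cS_insert (s : Finset ℕ) (i : ℕ) (hi : i ∉ s) (hi1 : 1 ≤ i)
    (hs : ∀ j ∈ s, 1 ≤ j) (n : ℕ) :
    cS (insert i s) n = cS s n + (if i ≤ n then cS (insert i s) (n - i) else 0) := by
  classical
  have hs' : ∀ j ∈ insert i s, 1 ≤ j := by
    intro j hj; rcases Finset.mem_insert.1 hj with h | h
    · omega
    · exact hs j h
  by_cases hin : i ≤ n
  · rw [if_pos hin]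
    -- equiv to sum type
    have e : {x : ℕ → ℕ // suppIn (insert i s) x ∧ wt (insert i s) x = n} ≃
        ({x : ℕ → ℕ // suppIn s x ∧ wt s x = n} ⊕
         {x : ℕ → ℕ // suppIn (insert i s) x ∧ wt (insert i s) x = n - i}) := by
      refine ⟨fun x => if hx0 : x.1 i = 0 then Sum.inl ⟨x.1, ?_, ?_⟩
          else Sum.inr ⟨Function.update x.1 i (x.1 i - 1), ?_, ?_⟩,
        fun y => y.elim (fun x => ⟨x.1, ?_, ?_⟩)
          (fun x => ⟨Function.update x.1 i (x.1 i + 1), ?_, ?_⟩), ?_, ?_⟩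
      · intro j hj
        by_cases hji : j = i
        · subst hji; exact hx0
        · exact x.2.1 j (by simp [hji, hj])
      · have := x.2.2
        rw [wt, Finset.sum_insert hi, hx0] at this
        simpa [wt] using this
      · intro j hj
        simp only [Finset.mem_insert, not_or] at hj
        rw [Function.update_of_ne hj.1]
        exact x.2.1 j (by simp [hj.1, hj.2])
      · have := x.2.2
        rw [wt, Finset.sum_insert hi] at this ⊢
        rw [Function.update_self]
        rw [Finset.sum_congr rfl (fun j hj => by
          rw [Function.update_of_ne (by rintro rfl; exact hi hj)])]
        have hx0' : 1 ≤ x.1 i := Nat.one_le_iff_ne_zero.2 hx0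
        have : i * x.1 i + ∑ j ∈ s, j * x.1 j = n := this
        have hii : i * (x.1 i - 1) = i * x.1 i - i := by
          rw [Nat.mul_sub, mul_one]
        have hle : i ≤ i * x.1 i := Nat.le_mul_of_pos_right i hx0'
        omega
      · intro j hj
        by_cases hji : j = i
        · subst hji; exact x.2.1 j hi
        · exact x.2.1 j (by simp [hji] at hj ⊢; exact hj)
      · have := x.2.2
        rw [wt] at this ⊢
        rw [Finset.sum_insert hi, x.2.1 i hi]
        simpa using this
      · intro j hj
        simp only [Finset.mem_insert, not_or] at hj
        rw [Function.update_of_ne hj.1]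
        exact x.2.1 j (by simp [hj.1, hj.2])
      · have := x.2.2
        rw [wt, Finset.sum_insert hi] at this ⊢
        rw [Function.update_self]
        rw [Finset.sum_congr rfl (fun j hj => by
          rw [Function.update_of_ne (by rintro rfl; exact hi hj)])]
        have : i * (x.1 i + 1) = i * x.1 i + i := by ring
        omega
      · -- left inverse
        rintro ⟨f, hf, hwf⟩
        dsimp only
        by_cases hf0 : f i = 0
        · rw [dif_pos hf0]; rfl
        · rw [dif_neg hf0]
          dsimp only [Sum.elim_inr]
          apply Subtype.ext
          funext j
          show Function.update (Function.update f i (f i - 1)) i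
              (Function.update f i (f i - 1) i + 1) j = f j
          by_cases hji : j = i
          · subst hji
            simp only [Function.update_self]
            omega
          · simp only [Function.update_of_ne hji]
      · -- right inverse
        rintro (⟨f, hf, hwf⟩ | ⟨f, hf, hwf⟩)
        · have hf0 : f i = 0 := hf i hi
          dsimp only [Sum.elim_inl]
          rw [dif_pos hf0]
        · have hne : Function.update f i (f i + 1) i ≠ 0 := by simp
          dsimp only [Sum.elim_inr]
          rw [dif_neg hne]
          congr 1
          apply Subtype.ext
          funext j
          show Function.update (Function.update f i (f i + 1)) i
              (Function.update f i (f i + 1) i - 1) j = f j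
          by_cases hji : j = i
          · subst hji; simp only [Function.update_self]; omega
          · simp only [Function.update_of_ne hji]
    rw [cS, Nat.card_congr e]
    have f1 := finite_cS s hs n
    have f2 := finite_cS (insert i s) hs' (n - i)
    rw [Nat.card_sum]
    rfl
  · rw [if_neg hin, add_zero]
    unfold cS
    apply Nat.card_congr
    refine ⟨fun x => ⟨x.1, ?_, ?_⟩, fun x => ⟨x.1, ?_, ?_⟩, ?_, ?_⟩
    · have hx0 : x.1 i = 0 := by
        by_contra h
        have h2 : i * x.1 i ≤ wt (insert i s) x.1 := Finset.single_le_sum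
          (f := fun j => j * x.1 j) (fun j _ => Nat.zero_le _) (Finset.mem_insert_self i s)
        rw [x.2.2] at h2
        nlinarith [Nat.one_le_iff_ne_zero.2 h]
      intro j hj
      by_cases hji : j = i
      · subst hji; exact hx0
      · exact x.2.1 j (by simp [hji, hj])
    · have hx0 : x.1 i = 0 := by
        by_contra h
        have h2 : i * x.1 i ≤ wt (insert i s) x.1 := Finset.single_le_sum
          (f := fun j => j * x.1 j) (fun j _ => Nat.zero_le _) (Finset.mem_insert_self i s)
        rw [x.2.2] at h2
        nlinarith [Nat.one_le_iff_ne_zero.2 h]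
      have := x.2.2
      rw [wt, Finset.sum_insert hi, hx0] at this
      simpa [wt] using this
    · intro j hj
      exact x.2.1 j (fun h => hj (Finset.mem_insert_of_mem h))
    · have := x.2.2
      rw [wt, Finset.sum_insert hi, x.2.1 i hi]
      simpa [wt] using this
    · rintro ⟨x, hx⟩; rfl
    · rintro ⟨x, hx⟩; rfl

end PPD
namespace PPD

lemma mk_cS_mul (s : Finset ℕ) (i : ℕ) (hi : i ∉ s) (hi1 : 1 ≤ i)
    (hs : ∀ j ∈ s, 1 ≤ j) :
    (PowerSeries.mk fun n => (cS (insert i s) n : ℤ)) * (1 - (PowerSeries.X : PowerSeries ℤ) ^ i)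
      = PowerSeries.mk fun n => (cS s n : ℤ) := by
  ext n
  rw [mul_sub, mul_one, map_sub, PowerSeries.coeff_mul_X_pow']
  simp only [PowerSeries.coeff_mk]
  rw [cS_insert s i hi hi1 hs n]
  split_ifs with h
  · push_cast; ring
  · push_cast; ring

lemma euler (s : Finset ℕ) (hs : ∀ i ∈ s, 1 ≤ i) :
    (PowerSeries.mk fun n => (cS s n : ℤ)) *
      ∏ i ∈ s, (1 - (PowerSeries.X : PowerSeries ℤ) ^ i) = 1 := by
  classical
  induction s using Finset.induction_on with
  | empty =>
    rw [Finset.prod_empty, mul_one]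
    ext n
    simp [cS_empty, PowerSeries.coeff_one]
  | @insert i s hi ih =>
    have hs' : ∀ j ∈ s, 1 ≤ j := fun j hj => hs j (Finset.mem_insert_of_mem hj)
    have hi1 : 1 ≤ i := hs i (Finset.mem_insert_self i s)
    rw [Finset.prod_insert hi, mul_comm (1 - PowerSeries.X ^ i), ← mul_assoc,
      mul_right_comm, mk_cS_mul s i hi hi1 hs', ih hs']
end PPD
namespace PPD

/-- the within-cell swap determined by `J` -/
def gJ (J : Finset ℕ) (j : ℕ) : ℕ :=
  if j % 3 = 1 ∧ j / 3 + 1 ∈ J then j + 1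
  else if j % 3 = 2 ∧ j / 3 + 1 ∈ J then j - 1
  else j

lemma gJ_of_mod0 {J : Finset ℕ} {j : ℕ} (h : j % 3 = 0) : gJ J j = j := by
  unfold gJ
  rw [if_neg (fun hc => by omega), if_neg (fun hc => by omega)]

lemma gJ_of_mem1 {J : Finset ℕ} {j : ℕ} (h : j % 3 = 1) (hm : j / 3 + 1 ∈ J) :
    gJ J j = j + 1 := by
  unfold gJ
  rw [if_pos ⟨h, hm⟩]

lemma gJ_of_not1 {J : Finset ℕ} {j : ℕ} (h : j % 3 = 1) (hm : j / 3 + 1 ∉ J) :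
    gJ J j = j := by
  unfold gJ
  rw [if_neg (fun hc => hm hc.2), if_neg (fun hc => by omega)]

lemma gJ_of_mem2 {J : Finset ℕ} {j : ℕ} (h : j % 3 = 2) (hm : j / 3 + 1 ∈ J) :
    gJ J j = j - 1 := by
  unfold gJ
  rw [if_neg (fun hc => by omega), if_pos ⟨h, hm⟩]

lemma gJ_of_not2 {J : Finset ℕ} {j : ℕ} (h : j % 3 = 2) (hm : j / 3 + 1 ∉ J) :
    gJ J j = j := by
  unfold gJ
  rw [if_neg (fun hc => by omega), if_neg (fun hc => hm hc.2)]

lemma gJ_cases (J : Finset ℕ) (j : ℕ) :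
    gJ J j = j ∨ (j % 3 = 1 ∧ j / 3 + 1 ∈ J ∧ gJ J j = j + 1) ∨
      (j % 3 = 2 ∧ j / 3 + 1 ∈ J ∧ gJ J j = j - 1) := by
  have h3 : j % 3 = 0 ∨ j % 3 = 1 ∨ j % 3 = 2 := by omega
  rcases h3 with h | h | h
  · exact Or.inl (gJ_of_mod0 h)
  · by_cases hm : j / 3 + 1 ∈ J
    · exact Or.inr (Or.inl ⟨h, hm, gJ_of_mem1 h hm⟩)
    · exact Or.inl (gJ_of_not1 h hm)
  · by_cases hm : j / 3 + 1 ∈ J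
    · exact Or.inr (Or.inr ⟨h, hm, gJ_of_mem2 h hm⟩)
    · exact Or.inl (gJ_of_not2 h hm)

lemma gJ_invol (J : Finset ℕ) (j : ℕ) : gJ J (gJ J j) = j := by
  have h3 : j % 3 = 0 ∨ j % 3 = 1 ∨ j % 3 = 2 := by omega
  rcases h3 with h | h | h
  · rw [gJ_of_mod0 h, gJ_of_mod0 h]
  · by_cases hm : j / 3 + 1 ∈ J
    · rw [gJ_of_mem1 h hm]
      have h2 : (j + 1) % 3 = 2 := by omega
      have h3 : (j + 1) / 3 = j / 3 := by omega
      rw [gJ_of_mem2 h2 (h3 ▸ hm)]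
      omega
    · rw [gJ_of_not1 h hm, gJ_of_not1 h hm]
  · by_cases hm : j / 3 + 1 ∈ J
    · rw [gJ_of_mem2 h hm]
      have h2 : (j - 1) % 3 = 1 := by omega
      have h3 : (j - 1) / 3 = j / 3 := by omega
      rw [gJ_of_mem1 h2 (h3 ▸ hm), Nat.sub_add_cancel (by omega)]
    · rw [gJ_of_not2 h hm, gJ_of_not2 h hm]

lemma gJ_lt {J : Finset ℕ} {k j : ℕ} (hj : j < 3 * k + 1) : gJ J j < 3 * k + 1 := by
  rcases gJ_cases J j with h | ⟨h1, _, h⟩ | ⟨h1, _, h⟩ <;> omega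

lemma gJ_ge {J : Finset ℕ} {k j : ℕ} (hj : 3 * k + 1 ≤ j) : 3 * k + 1 ≤ gJ J j := by
  rcases gJ_cases J j with h | ⟨h1, _, h⟩ | ⟨h1, _, h⟩ <;> omega

/-- position `m` carries a mandatory strict gap -/
def sCond (J : Finset ℕ) (m : ℕ) : Prop := (m + 1) % 3 = 0 ∧ (m + 1) / 3 ∈ J

instance (J : Finset ℕ) (m : ℕ) : Decidable (sCond J m) := by
  unfold sCond; infer_instance

/-- the chain value at position `j` built from gaps `x` and strict markers from `J` -/
def bF (k : ℕ) (J : Finset ℕ) (x : ℕ → ℕ) (j : ℕ) : ℕ :=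
  (∑ m ∈ Icc (j + 1) (3 * k + 1), x m) + (J.filter fun i => j + 1 ≤ 3 * i - 1).card

lemma bF_antitone {k : ℕ} {J : Finset ℕ} {x : ℕ → ℕ} {j j' : ℕ} (h : j ≤ j') :
    bF k J x j' ≤ bF k J x j := by
  unfold bF
  refine Nat.add_le_add ?_ (Finset.card_le_card ?_)
  · exact Finset.sum_le_sum_of_subset (Finset.Icc_subset_Icc_left (by omega))
  · exact Finset.monotone_filter_right J (fun i hi => by omega)

lemma bF_zero {k : ℕ} {J : Finset ℕ} {x : ℕ → ℕ} (hJ : J ⊆ Icc 1 k) {j : ℕ}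
    (hj : 3 * k + 1 ≤ j) : bF k J x j = 0 := by
  unfold bF
  rw [Finset.Icc_eq_empty (by omega), Finset.sum_empty,
    Finset.filter_false_of_mem, Finset.card_empty]
  intro i hi
  have := Finset.mem_Icc.1 (hJ hi)
  omega

lemma bF_gap {k : ℕ} {J : Finset ℕ} {x : ℕ → ℕ} (hJ : J ⊆ Icc 1 k) {j : ℕ}
    (hj : j ≤ 3 * k) :
    bF k J x j = bF k J x (j + 1) + x (j + 1) + (if sCond J (j + 1) then 1 else 0) := by
  have hIcc : Icc (j + 1) (3 * k + 1) = insert (j + 1) (Icc (j + 2) (3 * k + 1)) := by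
    ext m; simp only [Finset.mem_Icc, Finset.mem_insert]; omega
  have hsplit : (J.filter fun i => j + 1 ≤ 3 * i - 1) =
      (J.filter fun i => j + 2 ≤ 3 * i - 1) ∪ (J.filter fun i => 3 * i = j + 2) := by
    ext i
    simp only [Finset.mem_filter, Finset.mem_union]
    constructor
    · rintro ⟨hiJ, hle⟩
      have h1i := (Finset.mem_Icc.1 (hJ hiJ)).1
      by_cases h' : j + 2 ≤ 3 * i - 1
      · exact Or.inl ⟨hiJ, h'⟩
      · exact Or.inr ⟨hiJ, by omega⟩
    · rintro (⟨hiJ, h⟩ | ⟨hiJ, h⟩) <;>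
        (have h1i := (Finset.mem_Icc.1 (hJ hiJ)).1; exact ⟨hiJ, by omega⟩)
  have hdisj : Disjoint (J.filter fun i => j + 2 ≤ 3 * i - 1)
      (J.filter fun i => 3 * i = j + 2) := by
    rw [Finset.disjoint_left]
    intro i h1 h2
    rw [Finset.mem_filter] at h1 h2
    have h1i := (Finset.mem_Icc.1 (hJ h1.1)).1
    omega
  have hsingle : (J.filter fun i => 3 * i = j + 2) =
      if sCond J (j + 1) then {(j + 2) / 3} else ∅ := by
    ext i
    simp only [Finset.mem_filter]
    split_ifs with hc
    · simp only [Finset.mem_singleton]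
      obtain ⟨hc1, hc2⟩ := hc
      constructor
      · rintro ⟨hiJ, h⟩; omega
      · rintro rfl
        refine ⟨?_, by omega⟩
        have : (j + 1 + 1) / 3 = (j + 2) / 3 := by norm_num
        exact this ▸ hc2
    · simp only [Finset.notMem_empty, iff_false]
      rintro ⟨hiJ, h⟩
      apply hc
      constructor
      · omega
      · have : (j + 1 + 1) / 3 = i := by omega
        rw [this]; exact hiJ
  rw [bF, bF, hIcc, Finset.sum_insert (by simp [Finset.mem_Icc]),
    hsplit, Finset.card_union_of_disjoint hdisj, hsingle]
  have h2 : (Icc (j + 1 + 1) (3 * k + 1)) = Icc (j + 2) (3 * k + 1) := by norm_num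
  have h3 : (J.filter fun i => j + 1 + 1 ≤ 3 * i - 1) = J.filter fun i => j + 2 ≤ 3 * i - 1 := by
    apply Finset.filter_congr
    intro i _
    constructor <;> (intro; omega)
  rw [h2, h3]
  split_ifs <;> simp <;> omega

lemma bF_sum {k : ℕ} {J : Finset ℕ} {x : ℕ → ℕ} (hJ : J ⊆ Icc 1 k) :
    ∑ j ∈ range (3 * k + 1), bF k J x j =
      (∑ m ∈ Icc 1 (3 * k + 1), m * x m) + mJ J := by
  unfold bF
  rw [Finset.sum_add_distrib]
  congr 1
  · -- part sums
    have h1 : ∀ j ∈ range (3 * k + 1), ∑ m ∈ Icc (j + 1) (3 * k + 1), x m =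
        ∑ m ∈ Icc 1 (3 * k + 1), if j + 1 ≤ m then x m else 0 := by
      intro j hj
      rw [← Finset.sum_filter]
      congr 1
      ext m
      simp only [Finset.mem_Icc, Finset.mem_filter]
      omega
    rw [Finset.sum_congr rfl h1, Finset.sum_comm]
    refine Finset.sum_congr rfl fun m hm => ?_
    rw [Finset.mem_Icc] at hm
    rw [← Finset.sum_filter]
    have : (range (3 * k + 1)).filter (fun j => j + 1 ≤ m) = range m := by
      ext j
      simp only [Finset.mem_filter, Finset.mem_range]
      omega
    rw [this, Finset.sum_const, Finset.card_range, smul_eq_mul]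
  · -- strict markers
    have h1 : ∀ j ∈ range (3 * k + 1), (J.filter fun i => j + 1 ≤ 3 * i - 1).card =
        ∑ i ∈ J, if j + 1 ≤ 3 * i - 1 then 1 else 0 := by
      intro j hj
      rw [Finset.card_filter]
    rw [Finset.sum_congr rfl h1, Finset.sum_comm]
    refine Finset.sum_congr rfl fun i hi => ?_
    have h1i := Finset.mem_Icc.1 (hJ hi)
    rw [← Finset.sum_filter]
    have : (range (3 * k + 1)).filter (fun j => j + 1 ≤ 3 * i - 1) = range (3 * i - 1) := by
      ext j
      simp only [Finset.mem_filter, Finset.mem_range]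
      omega
    rw [this, Finset.sum_const, Finset.card_range, smul_eq_mul, mul_one]

end PPD
section Part3b
namespace PPD
open Finset

variable {k : ℕ}

/-- extend a `Fin`-indexed family by zero -/
def aE (a : Fin (3 * k + 1) → ℕ) : ℕ → ℕ := fun j =>
  if h : j < 3 * k + 1 then a ⟨j, h⟩ else 0

lemma aE_lt (a : Fin (3 * k + 1) → ℕ) {j : ℕ} (h : j < 3 * k + 1) :
    aE a j = a ⟨j, h⟩ := dif_pos h

lemma aE_ge (a : Fin (3 * k + 1) → ℕ) {j : ℕ} (h : 3 * k + 1 ≤ j) :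
    aE a j = 0 := dif_neg (by omega)

/-- the set of cells where the middle pair is in increasing order -/
def Jof (a : Fin (3 * k + 1) → ℕ) : Finset ℕ :=
  (Icc 1 k).filter fun i => aE a (3 * i - 2) < aE a (3 * i - 1)

lemma Jof_subset (a : Fin (3 * k + 1) → ℕ) : Jof a ⊆ Icc 1 k :=
  Finset.filter_subset _ _

/-- the sorted chain of a diamond -/
def bO (a : Fin (3 * k + 1) → ℕ) : ℕ → ℕ := fun j => aE a (gJ (Jof a) j)

/-- the gap sequence of a diamond -/
def xO (a : Fin (3 * k + 1) → ℕ) : ℕ → ℕ := fun m =>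
  if 1 ≤ m ∧ m ≤ 3 * k + 1 then
    bO a (m - 1) - bO a m - (if sCond (Jof a) m then 1 else 0)
  else 0

lemma aE_diamond {a : Fin (3 * k + 1) → ℕ} (hd : IsDiamond k a) {i0 : ℕ} (h : i0 < k) :
    aE a (3 * i0 + 1) ≤ aE a (3 * i0) ∧ aE a (3 * i0 + 2) ≤ aE a (3 * i0) ∧
    aE a (3 * i0 + 3) ≤ aE a (3 * i0 + 1) ∧ aE a (3 * i0 + 3) ≤ aE a (3 * i0 + 2) := by
  have H := hd i0 h
  rw [aE_lt a (show 3 * i0 < 3 * k + 1 by omega),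
    aE_lt a (show 3 * i0 + 1 < 3 * k + 1 by omega),
    aE_lt a (show 3 * i0 + 2 < 3 * k + 1 by omega),
    aE_lt a (show 3 * i0 + 3 < 3 * k + 1 by omega)]
  exact H

lemma bO_zero (a : Fin (3 * k + 1) → ℕ) {j : ℕ} (hj : 3 * k + 1 ≤ j) : bO a j = 0 :=
  aE_ge a (gJ_ge hj)

lemma bO_gap {a : Fin (3 * k + 1) → ℕ} (hd : IsDiamond k a) {j : ℕ} (hj : j ≤ 3 * k) :
    bO a (j + 1) + (if sCond (Jof a) (j + 1) then 1 else 0) ≤ bO a j := by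
  obtain ⟨i0, hji⟩ : ∃ i0, j = 3 * i0 ∨ j = 3 * i0 + 1 ∨ j = 3 * i0 + 2 := ⟨j / 3, by omega⟩
  rcases hji with rfl | rfl | rfl
  · -- j = 3 i0
    by_cases hk : i0 < k
    · have hs : ¬ sCond (Jof a) (3 * i0 + 1) := fun hc => by
        obtain ⟨hc1, _⟩ := hc; omega
      rw [if_neg hs, add_zero]
      have e0 : bO a (3 * i0) = aE a (3 * i0) := by
        rw [bO, gJ_of_mod0 (by omega)]
      have hD := aE_diamond hd hk
      by_cases hm : (3 * i0 + 1) / 3 + 1 ∈ Jof a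
      · rw [bO, gJ_of_mem1 (by omega) hm, e0]
        have : 3 * i0 + 1 + 1 = 3 * i0 + 2 := by omega
        rw [this]
        exact hD.2.1
      · rw [bO, gJ_of_not1 (by omega) hm, e0]
        exact hD.1
    · -- i0 = k, j = 3k
      have hik : i0 = k := by omega
      have hs : ¬ sCond (Jof a) (3 * i0 + 1) := fun hc => by
        obtain ⟨hc1, _⟩ := hc; omega
      rw [if_neg hs, add_zero]
      have hm : (3 * i0 + 1) / 3 + 1 ∉ Jof a := by
        intro hmem
        have := Finset.mem_Icc.1 (Jof_subset a hmem)
        omega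
      rw [bO, gJ_of_not1 (by omega) hm, aE_ge a (by omega)]
      exact Nat.zero_le _
  · -- j = 3 i0 + 1
    have hk : i0 < k := by omega
    have hD := aE_diamond hd hk
    have e2 : (3 * i0 + 1 + 1) / 3 + 1 = i0 + 1 := by omega
    by_cases hm : i0 + 1 ∈ Jof a
    · have hs : sCond (Jof a) (3 * i0 + 1 + 1) := ⟨by omega, by
        have : (3 * i0 + 1 + 1 + 1) / 3 = i0 + 1 := by omega
        rw [this]; exact hm⟩
      rw [if_pos hs]
      have hb1 : bO a (3 * i0 + 1) = aE a (3 * i0 + 2) := by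
        rw [bO, gJ_of_mem1 (by omega) (by
          have : (3 * i0 + 1) / 3 + 1 = i0 + 1 := by omega
          rw [this]; exact hm)]
      have hb2 : bO a (3 * i0 + 1 + 1) = aE a (3 * i0 + 1) := by
        rw [bO, gJ_of_mem2 (by omega) (by
          have : (3 * i0 + 1 + 1) / 3 + 1 = i0 + 1 := by omega
          rw [this]; exact hm)]
        norm_num
      have hlt := (Finset.mem_filter.1 hm).2
      have e3 : 3 * (i0 + 1) - 2 = 3 * i0 + 1 := by omega
      have e4 : 3 * (i0 + 1) - 1 = 3 * i0 + 2 := by omega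
      rw [e3, e4] at hlt
      rw [hb1, hb2]
      omega
    · have hs : ¬ sCond (Jof a) (3 * i0 + 1 + 1) := by
        rintro ⟨hc1, hc2⟩
        apply hm
        have : (3 * i0 + 1 + 1 + 1) / 3 = i0 + 1 := by omega
        rw [this] at hc2; exact hc2
      rw [if_neg hs, add_zero]
      have hb1 : bO a (3 * i0 + 1) = aE a (3 * i0 + 1) := by
        rw [bO, gJ_of_not1 (by omega) (by
          have : (3 * i0 + 1) / 3 + 1 = i0 + 1 := by omega
          rw [this]; exact hm)]
      have hb2 : bO a (3 * i0 + 1 + 1) = aE a (3 * i0 + 2) := by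
        rw [bO, gJ_of_not2 (by omega) (by
          have : (3 * i0 + 1 + 1) / 3 + 1 = i0 + 1 := by omega
          rw [this]; exact hm)]
      have hnlt : ¬ (aE a (3 * i0 + 1) < aE a (3 * i0 + 2)) := by
        intro hlt
        apply hm
        apply Finset.mem_filter.2
        refine ⟨Finset.mem_Icc.2 ⟨by omega, by omega⟩, ?_⟩
        have e3 : 3 * (i0 + 1) - 2 = 3 * i0 + 1 := by omega
        have e4 : 3 * (i0 + 1) - 1 = 3 * i0 + 2 := by omega
        rw [e3, e4]; exact hlt
      rw [hb1, hb2]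
      omega
  · -- j = 3 i0 + 2
    have hk : i0 < k := by omega
    have hD := aE_diamond hd hk
    have hs : ¬ sCond (Jof a) (3 * i0 + 2 + 1) := fun hc => by
      obtain ⟨hc1, _⟩ := hc; omega
    rw [if_neg hs, add_zero]
    have hb2 : bO a (3 * i0 + 2 + 1) = aE a (3 * i0 + 3) := by
      rw [bO, gJ_of_mod0 (by omega)]
    rw [hb2]
    by_cases hm : (3 * i0 + 2) / 3 + 1 ∈ Jof a
    · rw [bO, gJ_of_mem2 (by omega) hm]
      have : 3 * i0 + 2 - 1 = 3 * i0 + 1 := by omega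
      rw [this]
      exact hD.2.2.1
    · rw [bO, gJ_of_not2 (by omega) hm]
      exact hD.2.2.2

lemma bF_eq_bO {a : Fin (3 * k + 1) → ℕ} (hd : IsDiamond k a) (j : ℕ) :
    bF k (Jof a) (xO a) j = bO a j := by
  have key : ∀ d, bF k (Jof a) (xO a) (3 * k + 1 - d) = bO a (3 * k + 1 - d) := by
    intro d
    induction d with
    | zero =>
      simp only [Nat.sub_zero]
      rw [bF_zero (Jof_subset a) (le_refl _), bO_zero a (le_refl _)]
    | succ d ih =>
      by_cases hd1 : d < 3 * k + 1
      · have hj1 : 3 * k + 1 - d = (3 * k + 1 - (d + 1)) + 1 := by omega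
        set j := 3 * k + 1 - (d + 1) with hjdef
        have hjk : j ≤ 3 * k := by omega
        rw [hj1] at ih
        rw [bF_gap (Jof_subset a) hjk, ih]
        have hgap := bO_gap hd hjk
        have hx : xO a (j + 1) =
            bO a j - bO a (j + 1) - (if sCond (Jof a) (j + 1) then 1 else 0) := by
          rw [xO, if_pos ⟨by omega, by omega⟩]
          norm_num
        rw [hx]
        omega
      · have he : 3 * k + 1 - (d + 1) = 3 * k + 1 - d := by omega
        rw [he]; exact ih
  by_cases hj : j ≤ 3 * k + 1
  · have : j = 3 * k + 1 - (3 * k + 1 - j) := by omega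
    rw [this]; exact key _
  · rw [bF_zero (Jof_subset a) (by omega), bO_zero a (by omega)]

end PPD
end Part3b
section Part3c
namespace PPD
open Finset

variable {k : ℕ}

lemma forward_diamond {J : Finset ℕ} {x : ℕ → ℕ} :
    IsDiamond k (fun p : Fin (3 * k + 1) => bF k J x (gJ J (p : ℕ))) := by
  intro i0 h
  have e0 : gJ J (3 * i0) = 3 * i0 := gJ_of_mod0 (by omega)
  have e3 : gJ J (3 * i0 + 3) = 3 * i0 + 3 := gJ_of_mod0 (by omega)
  have b1 : 3 * i0 + 1 ≤ gJ J (3 * i0 + 1) ∧ gJ J (3 * i0 + 1) ≤ 3 * i0 + 2 := by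
    rcases gJ_cases J (3 * i0 + 1) with h' | ⟨h1, _, h2⟩ | ⟨h1, _, h2⟩ <;> omega
  have b2 : 3 * i0 + 1 ≤ gJ J (3 * i0 + 2) ∧ gJ J (3 * i0 + 2) ≤ 3 * i0 + 2 := by
    rcases gJ_cases J (3 * i0 + 2) with h' | ⟨h1, _, h2⟩ | ⟨h1, _, h2⟩ <;> omega
  refine ⟨?_, ?_, ?_, ?_⟩
  · show bF k J x (gJ J (3 * i0 + 1)) ≤ bF k J x (gJ J (3 * i0))
    rw [e0]; exact bF_antitone (by omega)
  · show bF k J x (gJ J (3 * i0 + 2)) ≤ bF k J x (gJ J (3 * i0))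
    rw [e0]; exact bF_antitone (by omega)
  · show bF k J x (gJ J (3 * i0 + 3)) ≤ bF k J x (gJ J (3 * i0 + 1))
    rw [e3]; exact bF_antitone (by omega)
  · show bF k J x (gJ J (3 * i0 + 3)) ≤ bF k J x (gJ J (3 * i0 + 2))
    rw [e3]; exact bF_antitone (by omega)

lemma forward_sum {J : Finset ℕ} {x : ℕ → ℕ} (hJ : J ⊆ Icc 1 k) :
    ∑ p : Fin (3 * k + 1), bF k J x (gJ J (p : ℕ)) =
      (∑ m ∈ Icc 1 (3 * k + 1), m * x m) + mJ J := by
  rw [Fin.sum_univ_eq_sum_range (fun j => bF k J x (gJ J j)) (3 * k + 1)]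
  rw [show (∑ j ∈ range (3 * k + 1), bF k J x (gJ J j)) =
      ∑ j ∈ range (3 * k + 1), bF k J x j from
    Finset.sum_nbij' (gJ J) (gJ J)
      (fun j hj => Finset.mem_range.2 (gJ_lt (Finset.mem_range.1 hj)))
      (fun j hj => Finset.mem_range.2 (gJ_lt (Finset.mem_range.1 hj)))
      (fun j _ => gJ_invol J j) (fun j _ => gJ_invol J j) (fun j _ => rfl)]
  exact bF_sum hJ

lemma bO_sum (a : Fin (3 * k + 1) → ℕ) :
    ∑ j ∈ range (3 * k + 1), bO a j = ∑ p : Fin (3 * k + 1), a p := by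
  rw [show (∑ j ∈ range (3 * k + 1), bO a j) = ∑ j ∈ range (3 * k + 1), aE a j from
    Finset.sum_nbij' (gJ (Jof a)) (gJ (Jof a))
      (fun j hj => Finset.mem_range.2 (gJ_lt (Finset.mem_range.1 hj)))
      (fun j hj => Finset.mem_range.2 (gJ_lt (Finset.mem_range.1 hj)))
      (fun j _ => gJ_invol _ j) (fun j _ => gJ_invol _ j) (fun j _ => rfl)]
  rw [← Fin.sum_univ_eq_sum_range (aE a) (3 * k + 1)]
  refine Finset.sum_congr rfl fun p _ => ?_
  rw [aE_lt a p.isLt, Fin.eta]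

lemma aE_forward {J : Finset ℕ} {x : ℕ → ℕ} (hJ : J ⊆ Icc 1 k) (j : ℕ) :
    aE (fun p : Fin (3 * k + 1) => bF k J x (gJ J (p : ℕ))) j = bF k J x (gJ J j) := by
  by_cases h : j < 3 * k + 1
  · rw [aE_lt _ h]
  · rw [aE_ge _ (by omega), bF_zero hJ (gJ_ge (by omega))]

lemma Jof_forward {J : Finset ℕ} {x : ℕ → ℕ} (hJ : J ⊆ Icc 1 k) :
    Jof (fun p : Fin (3 * k + 1) => bF k J x (gJ J (p : ℕ))) = J := by
  ext i
  rw [Jof, Finset.mem_filter, aE_forward hJ, aE_forward hJ]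
  constructor
  · rintro ⟨hIcc, hlt⟩
    by_contra hiJ
    have h1 : 1 ≤ i := (Finset.mem_Icc.1 hIcc).1
    have g1 : gJ J (3 * i - 2) = 3 * i - 2 := gJ_of_not1 (by omega)
      (by rw [show (3 * i - 2) / 3 + 1 = i from by omega]; exact hiJ)
    have g2 : gJ J (3 * i - 1) = 3 * i - 1 := gJ_of_not2 (by omega)
      (by rw [show (3 * i - 1) / 3 + 1 = i from by omega]; exact hiJ)
    rw [g1, g2] at hlt
    exact absurd hlt (not_lt.2 (bF_antitone (by omega)))
  · intro hiJ
    have hIcc := hJ hiJ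
    obtain ⟨h1, h2⟩ := Finset.mem_Icc.1 hIcc
    refine ⟨hIcc, ?_⟩
    have g1 : gJ J (3 * i - 2) = 3 * i - 1 := by
      rw [gJ_of_mem1 (by omega)
        (by rw [show (3 * i - 2) / 3 + 1 = i from by omega]; exact hiJ)]
      omega
    have g2 : gJ J (3 * i - 1) = 3 * i - 2 := by
      rw [gJ_of_mem2 (by omega)
        (by rw [show (3 * i - 1) / 3 + 1 = i from by omega]; exact hiJ)]
      omega
    rw [g1, g2]
    have hgap := bF_gap (x := x) hJ (show 3 * i - 2 ≤ 3 * k by omega)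
    rw [show 3 * i - 2 + 1 = 3 * i - 1 from by omega] at hgap
    have hsC : sCond J (3 * i - 1) :=
      ⟨by omega, by rw [show (3 * i - 1 + 1) / 3 = i from by omega]; exact hiJ⟩
    rw [if_pos hsC] at hgap
    omega

lemma xO_forward {J : Finset ℕ} {x : ℕ → ℕ} (hJ : J ⊆ Icc 1 k)
    (hsupp : suppIn (Icc 1 (3 * k + 1)) x) :
    xO (fun p : Fin (3 * k + 1) => bF k J x (gJ J (p : ℕ))) = x := by
  funext m
  set a := fun p : Fin (3 * k + 1) => bF k J x (gJ J (p : ℕ)) with ha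
  have hbO : ∀ j, bO a j = bF k J x j := by
    intro j
    rw [bO, Jof_forward hJ, aE_forward hJ, gJ_invol]
  by_cases hm : 1 ≤ m ∧ m ≤ 3 * k + 1
  · rw [xO, if_pos hm, hbO, hbO, Jof_forward hJ]
    have hgap := bF_gap (x := x) hJ (show m - 1 ≤ 3 * k by omega)
    rw [show m - 1 + 1 = m from by omega] at hgap
    omega
  · rw [xO, if_neg hm]
    exact (hsupp m (by rw [Finset.mem_Icc]; omega)).symm

/-- the central bijection -/
noncomputable def diamondEquiv (k n : ℕ) :
    {p : Finset ℕ × (ℕ → ℕ) // p.1 ⊆ Icc 1 k ∧ suppIn (Icc 1 (3 * k + 1)) p.2 ∧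
        wt (Icc 1 (3 * k + 1)) p.2 + mJ p.1 = n} ≃
    {a : Fin (3 * k + 1) → ℕ // IsDiamond k a ∧ ∑ i, a i = n} where
  toFun p := ⟨fun q => bF k p.1.1 p.1.2 (gJ p.1.1 (q : ℕ)), forward_diamond, by
    rw [forward_sum p.2.1]
    have := p.2.2.2
    rw [wt] at this
    omega⟩
  invFun d := ⟨(Jof d.1, xO d.1), Jof_subset _, (fun m hm => by
      show xO d.1 m = 0
      rw [xO, if_neg (by rw [Finset.mem_Icc] at hm; omega)]), by
    have h1 := bF_sum (x := xO d.1) (Jof_subset d.1)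
    rw [Finset.sum_congr rfl (fun j _ => bF_eq_bO d.2.1 j), bO_sum, d.2.2] at h1
    show wt (Icc 1 (3 * k + 1)) (xO d.1) + mJ (Jof d.1) = n
    rw [wt]
    omega⟩
  left_inv := by
    rintro ⟨⟨J, x⟩, hJ, hsupp, hwt⟩
    apply Subtype.ext
    show (Jof _, xO _) = (J, x)
    rw [Jof_forward hJ, xO_forward hJ hsupp]
  right_inv := by
    rintro ⟨a, hd, hsum⟩
    apply Subtype.ext
    funext q
    show bF k (Jof a) (xO a) (gJ (Jof a) (q : ℕ)) = a q
    rw [bF_eq_bO hd, bO, gJ_invol, aE_lt a q.isLt, Fin.eta]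

lemma nat_card_sigma {ι : Type*} [Fintype ι] (f : ι → Type*) [∀ i, Finite (f i)] :
    Nat.card (Σ i, f i) = ∑ i, Nat.card (f i) := by
  letI : ∀ i, Fintype (f i) := fun i => Fintype.ofFinite _
  simp [Nat.card_eq_fintype_card, Fintype.card_sigma]

end PPD
end Part3c
section Part4
namespace PPD
open Finset

lemma ppD_eq (k n : ℕ) :
    ppD k n = ∑ J ∈ (Icc 1 k).powerset,
      (if mJ J ≤ n then cS (Icc 1 (3 * k + 1)) (n - mJ J) else 0) := by
  classical
  rw [ppD, ← Nat.card_congr (diamondEquiv k n)]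
  have E2 : {p : Finset ℕ × (ℕ → ℕ) // p.1 ⊆ Icc 1 k ∧ suppIn (Icc 1 (3 * k + 1)) p.2 ∧
        wt (Icc 1 (3 * k + 1)) p.2 + mJ p.1 = n} ≃
      Σ J : ((Icc 1 k).powerset : Finset (Finset ℕ)),
        {x : ℕ → ℕ // suppIn (Icc 1 (3 * k + 1)) x ∧
          wt (Icc 1 (3 * k + 1)) x + mJ (J : Finset ℕ) = n} :=
    ⟨fun p => ⟨⟨p.1.1, Finset.mem_powerset.2 p.2.1⟩, ⟨p.1.2, p.2.2.1, p.2.2.2⟩⟩,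
     fun s => ⟨(s.1.1, s.2.1), Finset.mem_powerset.1 s.1.2, s.2.2.1, s.2.2.2⟩,
     fun p => rfl, fun s => rfl⟩
  rw [Nat.card_congr E2]
  haveI hfin : ∀ J : ((Icc 1 k).powerset : Finset (Finset ℕ)),
      Finite {x : ℕ → ℕ // suppIn (Icc 1 (3 * k + 1)) x ∧
        wt (Icc 1 (3 * k + 1)) x + mJ (J : Finset ℕ) = n} := by
    intro J
    by_cases h : mJ (J : Finset ℕ) ≤ n
    · have e := Equiv.subtypeEquivRight
        (p := fun x => suppIn (Icc 1 (3 * k + 1)) x ∧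
          wt (Icc 1 (3 * k + 1)) x + mJ (J : Finset ℕ) = n)
        (q := fun x => suppIn (Icc 1 (3 * k + 1)) x ∧
          wt (Icc 1 (3 * k + 1)) x = n - mJ (J : Finset ℕ))
        (fun x => ⟨fun ⟨h1, h2⟩ => ⟨h1, by omega⟩, fun ⟨h1, h2⟩ => ⟨h1, by omega⟩⟩)
      haveI := finite_cS (Icc 1 (3 * k + 1)) (fun i hi => (Finset.mem_Icc.1 hi).1)
        (n - mJ (J : Finset ℕ))
      exact Finite.of_equiv _ e.symm
    · haveI : IsEmpty {x : ℕ → ℕ // suppIn (Icc 1 (3 * k + 1)) x ∧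
          wt (Icc 1 (3 * k + 1)) x + mJ (J : Finset ℕ) = n} :=
        ⟨fun x => by have := x.2.2; omega⟩
      infer_instance
  rw [nat_card_sigma]
  rw [← Finset.sum_coe_sort ((Icc 1 k).powerset)
    (fun J => if mJ J ≤ n then cS (Icc 1 (3 * k + 1)) (n - mJ J) else 0)]
  refine Finset.sum_congr rfl fun J _ => ?_
  split_ifs with h
  · rw [cS]
    exact Nat.card_congr (Equiv.subtypeEquivRight
      (fun x => ⟨fun ⟨h1, h2⟩ => ⟨h1, by omega⟩, fun ⟨h1, h2⟩ => ⟨h1, by omega⟩⟩))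
  · haveI : IsEmpty {x : ℕ → ℕ // suppIn (Icc 1 (3 * k + 1)) x ∧
        wt (Icc 1 (3 * k + 1)) x + mJ (J : Finset ℕ) = n} :=
      ⟨fun x => by have := x.2.2; omega⟩
    exact Nat.card_of_isEmpty

end PPD
end Part4

open Finset in
theorem stmt9' (k : ℕ) (hk : 1 ≤ k) :
    (PowerSeries.mk fun n => (ppD k n : ℤ)) *
        ∏ i ∈ Finset.Icc 1 (3 * k + 1), (1 - (PowerSeries.X : PowerSeries ℤ) ^ i)
      = ∏ i ∈ Finset.Icc 1 k, (1 + (PowerSeries.X : PowerSeries ℤ) ^ (3 * i - 1)) := by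
  classical
  have hpos : ∀ i ∈ Finset.Icc 1 (3 * k + 1), 1 ≤ i := fun i hi => (Finset.mem_Icc.1 hi).1
  have hA : (PowerSeries.mk fun n => (ppD k n : ℤ)) =
      ∑ J ∈ (Finset.Icc 1 k).powerset,
        (PowerSeries.mk fun n => (PPD.cS (Finset.Icc 1 (3 * k + 1)) n : ℤ)) *
          (PowerSeries.X : PowerSeries ℤ) ^ (mJ J) := by
    ext n
    rw [PowerSeries.coeff_mk, PPD.ppD_eq k n, map_sum]
    push_cast
    refine Finset.sum_congr rfl fun J hJ => ?_
    rw [PowerSeries.coeff_mul_X_pow']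
    split_ifs with h
    · rw [PowerSeries.coeff_mk]
    · rfl
  have hE := PPD.euler (Finset.Icc 1 (3 * k + 1)) hpos
  have hsum : (∑ J ∈ (Finset.Icc 1 k).powerset,
      ((PowerSeries.mk fun n => (PPD.cS (Finset.Icc 1 (3 * k + 1)) n : ℤ)) *
        (PowerSeries.X : PowerSeries ℤ) ^ (mJ J)) *
        ∏ i ∈ Finset.Icc 1 (3 * k + 1), (1 - (PowerSeries.X : PowerSeries ℤ) ^ i))
      = ∑ J ∈ (Finset.Icc 1 k).powerset, (PowerSeries.X : PowerSeries ℤ) ^ (mJ J) := by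
    refine Finset.sum_congr rfl fun J _ => ?_
    rw [mul_right_comm, hE, one_mul]
  rw [hA, Finset.sum_mul, hsum]
  have hcomm : ∀ i ∈ Finset.Icc 1 k,
      (1 + (PowerSeries.X : PowerSeries ℤ) ^ (3 * i - 1)) =
      ((PowerSeries.X : PowerSeries ℤ) ^ (3 * i - 1) + 1) := fun i _ => add_comm _ _
  rw [Finset.prod_congr rfl hcomm, Finset.prod_add]
  refine (Finset.sum_congr rfl fun J hJ => ?_).symm
  rw [Finset.prod_const_one, mul_one, Finset.prod_pow_eq_pow_sum]
  rfl
end PPDproof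

/-- the generating function identity
`(∑ D_k(n) qⁿ) · ∏_{i=1}^{3k+1} (1 − qⁱ) = ∏_{i=1}^{k} (1 + q^{3i−1})` in `ℤ[[q]]`. -/
theorem stmt9 (k : ℕ) (hk : 1 ≤ k) :
    (PowerSeries.mk fun n => (ppD k n : ℤ)) *
        ∏ i ∈ Finset.Icc 1 (3 * k + 1), (1 - (PowerSeries.X : PowerSeries ℤ) ^ i)
      = ∏ i ∈ Finset.Icc 1 k, (1 + (PowerSeries.X : PowerSeries ℤ) ^ (3 * i - 1)) :=
  stmt9' k hk
end

section
/- For every positive integer k, the following identity of formal power series in q holds: ( Σ_{n=0}^{∞} D_k(n) q^n ) · ∏_{i=1}^{α_k} (1 − q^{3i−1}) · ∏_{i ∈ A_k} (1 − q^i) = ∏_{i=α_k+1}^{k} (1 + q^{3i−1}). -/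
open Finset

open PowerSeries


open scoped Classical

namespace AuxPPD

noncomputable def cnt (r : ℕ) (w : Fin r → ℕ) (t : ℕ) : ℕ :=
  Nat.card {x : Fin r → ℕ // ∑ i, w i * x i = t}

noncomputable def cntF (r : ℕ) (w : Fin r → ℕ) (t : ℕ) : Finset (Fin r → ℕ) :=
  (Fintype.piFinset fun _ => Finset.range (t+1)).filter fun x => ∑ i, w i * x i = t

lemma cnt_eq_card (r : ℕ) (w : Fin r → ℕ) (hw : ∀ i, 0 < w i) (t : ℕ) :
    cnt r w t = (cntF r w t).card := by
  rw [← Nat.card_eq_finsetCard]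
  apply Nat.card_congr
  apply Equiv.subtypeEquivRight
  intro x
  simp only [cntF, mem_filter, Fintype.mem_piFinset, mem_range]
  constructor
  · intro hx
    refine ⟨fun i => ?_, hx⟩
    have h1 : w i * x i ≤ t := hx ▸ Finset.single_le_sum
      (f := fun i => w i * x i) (fun _ _ => Nat.zero_le _) (mem_univ i)
    have h2 : x i ≤ w i * x i := Nat.le_mul_of_pos_left _ (hw i)
    omega
  · tauto

lemma cnt_zero (w : Fin 0 → ℕ) (t : ℕ) : cnt 0 w t = if t = 0 then 1 else 0 := by
  rcases eq_or_ne t 0 with rfl | ht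
  · rw [if_pos rfl]
    have : ∀ x : Fin 0 → ℕ, ∑ i, w i * x i = 0 := by intro x; simp
    simp only [cnt]
    rw [Nat.card_eq_one_iff_unique]
    constructor
    · constructor
      intro a b
      ext ⟨i, hi⟩
      exact absurd hi (Nat.not_lt_zero _)
    · exact ⟨⟨fun i => 0, by simp⟩⟩
  · rw [if_neg ht]
    simp only [cnt]
    rw [Nat.card_eq_zero]
    left
    rw [isEmpty_subtype]
    intro x
    simp only [Finset.univ_eq_empty, Finset.sum_empty]
    omega

lemma cnt_succ (r : ℕ) (w : Fin (r+1) → ℕ) (hw : ∀ i, 0 < w i) (n : ℕ) :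
    cnt (r+1) w n = ∑ p ∈ Finset.HasAntidiagonal.antidiagonal n,
      (if w 0 ∣ p.1 then 1 else 0) * cnt r (w ∘ Fin.succ) p.2 := by
  rw [cnt_eq_card _ _ hw]
  have hH : ∀ x ∈ cntF (r+1) w n,
      (fun x : Fin (r+1) → ℕ => ((w 0 * x 0 : ℕ), n - w 0 * x 0)) x ∈ Finset.HasAntidiagonal.antidiagonal n := by
    intro x hx
    simp only [cntF, mem_filter] at hx
    have hle : w 0 * x 0 ≤ n := by
      rw [← hx.2]
      exact Finset.single_le_sum (f := fun i => w i * x i) (fun _ _ => Nat.zero_le _) (mem_univ 0)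
    simp only [Finset.HasAntidiagonal.mem_antidiagonal]
    omega
  rw [Finset.card_eq_sum_card_fiberwise hH]
  apply Finset.sum_congr rfl
  intro p hp
  have hpn : p.1 + p.2 = n := Finset.HasAntidiagonal.mem_antidiagonal.mp hp
  by_cases hd : w 0 ∣ p.1
  · rw [if_pos hd, one_mul, show cnt r (w ∘ Fin.succ) p.2 = (cntF r (w ∘ Fin.succ) p.2).card
      from cnt_eq_card r (w ∘ Fin.succ) (fun i => hw i.succ) p.2]
    apply Finset.card_nbij' (i := fun x => Fin.tail x)
      (j := fun y => Fin.cons (p.1 / w 0) y)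
    · intro x hx
      simp only [Finset.mem_coe, mem_filter, cntF, Fintype.mem_piFinset, mem_range] at hx ⊢
      obtain ⟨⟨hb, hs⟩, hfib⟩ := hx
      have hsum : w 0 * x 0 + ∑ i : Fin r, w i.succ * x i.succ = n := by
        rw [← hs, Fin.sum_univ_succ]
      have h1 : w 0 * x 0 = p.1 := by
        have := congrArg Prod.fst hfib; simpa using this
      have htail : ∑ i : Fin r, w i.succ * x i.succ = p.2 := by omega
      refine ⟨fun i => ?_, htail⟩
      have : w i.succ * x i.succ ≤ p.2 := htail ▸ Finset.single_le_sum
        (f := fun i => w i.succ * x i.succ) (fun _ _ => Nat.zero_le _) (mem_univ i)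
      have := hw i.succ
      have : x i.succ ≤ w i.succ * x i.succ := Nat.le_mul_of_pos_left _ (hw i.succ)
      simp only [Fin.tail]
      omega
    · intro y hy
      simp only [Finset.mem_coe, mem_filter, cntF, Fintype.mem_piFinset, mem_range] at hy ⊢
      obtain ⟨hb, hs⟩ := hy
      simp only [Function.comp_apply] at hs
      have hq : w 0 * (p.1 / w 0) = p.1 := Nat.mul_div_cancel' hd
      have hsum : ∑ i : Fin (r+1), w i * (Fin.cons (p.1 / w 0) y : Fin (r+1) → ℕ) i = n := by
        rw [Fin.sum_univ_succ]
        simp only [Fin.cons_zero, Fin.cons_succ]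
        omega
      refine ⟨⟨fun i => ?_, hsum⟩, ?_⟩
      · refine Fin.cases ?_ ?_ i
        · simp only [Fin.cons_zero]
          have : p.1 / w 0 ≤ p.1 := Nat.div_le_self _ _
          omega
        · intro j
          simp only [Fin.cons_succ]
          have := hb j
          omega
      · simp only [Fin.cons_zero, hq]
        have h2 : n - p.1 = p.2 := by omega
        rw [h2]
    · intro x hx
      simp only [Finset.mem_coe, mem_filter, cntF] at hx
      have h1 : w 0 * x 0 = p.1 := by
        have := congrArg Prod.fst hx.2; simpa using this
      have hx0 : x 0 = p.1 / w 0 := by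
        rw [← h1, Nat.mul_div_cancel_left _ (hw 0)]
      rw [← hx0]; exact Fin.cons_self_tail x
    · intro y hy
      simp [Fin.tail_cons]
  · rw [if_neg hd, zero_mul]
    rw [Finset.card_eq_zero]
    rw [Finset.eq_empty_iff_forall_notMem]
    intro x hx
    simp only [mem_filter, cntF] at hx
    have h1 : w 0 * x 0 = p.1 := by
      have := congrArg Prod.fst hx.2; simpa using this
    exact hd ⟨x 0, h1.symm⟩

lemma geom_inv (d : ℕ) (hd : 0 < d) :
    (PowerSeries.mk fun n => if d ∣ n then (1:ℤ) else 0) * (1 - X ^ d) = 1 := by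
  ext n
  rw [mul_sub, mul_one, map_sub, PowerSeries.coeff_mul_X_pow', coeff_mk,
    PowerSeries.coeff_one]
  by_cases hn : d ≤ n
  · have h1 : d ∣ n ↔ d ∣ n - d := by
      constructor
      · intro h; exact Nat.dvd_sub h dvd_rfl
      · intro h; have : n = n - d + d := by omega
        rw [this]; exact Nat.dvd_add h dvd_rfl
    rw [if_pos hn, coeff_mk]
    have hn0 : ¬ n = 0 := by omega
    rw [if_neg hn0]
    by_cases h : d ∣ n
    · rw [if_pos h, if_pos (h1.mp h)]; ring
    · rw [if_neg h, if_neg (fun hc => h (h1.mpr hc))]; ring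
  · rw [if_neg hn, sub_zero]
    rcases eq_or_ne n 0 with rfl | hn0
    · simp
    · rw [if_neg hn0, if_neg]
      intro hdvd
      have := Nat.le_of_dvd (by omega) hdvd
      omega

lemma key (r : ℕ) : ∀ (w : Fin r → ℕ), (∀ i, 0 < w i) →
    (PowerSeries.mk fun n => (cnt r w n : ℤ)) * ∏ i, (1 - (X : PowerSeries ℤ) ^ w i) = 1 := by
  induction r with
  | zero =>
    intro w hw
    have h1 : (PowerSeries.mk fun n => (cnt 0 w n : ℤ)) = 1 := by
      ext n
      rw [coeff_mk, PowerSeries.coeff_one, cnt_zero]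
      split <;> simp
    rw [h1]
    simp
  | succ r ih =>
    intro w hw
    have h1 : (PowerSeries.mk fun n => (cnt (r+1) w n : ℤ))
        = (PowerSeries.mk fun n => if w 0 ∣ n then (1:ℤ) else 0) *
          (PowerSeries.mk fun n => (cnt r (w ∘ Fin.succ) n : ℤ)) := by
      ext n
      rw [PowerSeries.coeff_mul, coeff_mk, cnt_succ r w hw n]
      push_cast
      apply Finset.sum_congr rfl
      intro p _
      rw [coeff_mk, coeff_mk]
    rw [h1, Fin.prod_univ_succ]
    rw [show (PowerSeries.mk fun n => if w 0 ∣ n then (1:ℤ) else 0) *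
          (PowerSeries.mk fun n => (cnt r (w ∘ Fin.succ) n : ℤ)) *
          ((1 - (X : PowerSeries ℤ) ^ w 0) * ∏ i : Fin r, (1 - (X : PowerSeries ℤ) ^ w i.succ))
        = ((PowerSeries.mk fun n => if w 0 ∣ n then (1:ℤ) else 0) * (1 - X ^ w 0)) *
          ((PowerSeries.mk fun n => (cnt r (w ∘ Fin.succ) n : ℤ)) *
            ∏ i : Fin r, (1 - (X : PowerSeries ℤ) ^ (w ∘ Fin.succ) i)) from by
      simp only [Function.comp]; ring]
    rw [geom_inv _ (hw 0), ih (w ∘ Fin.succ) (fun i => hw i.succ), one_mul]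



/-- Zero-extension of a `Fin r`-tuple to `ℕ`. -/
def ext (r : ℕ) (x : Fin r → ℕ) : ℕ → ℕ := fun j => if h : j < r then x ⟨j, h⟩ else 0

lemma ext_lt {r : ℕ} (x : Fin r → ℕ) {j : ℕ} (h : j < r) : ext r x j = x ⟨j, h⟩ := dif_pos h

lemma ext_ge {r : ℕ} (x : Fin r → ℕ) {j : ℕ} (h : ¬ j < r) : ext r x j = 0 := dif_neg h

def dlt (S : Finset ℕ) (l : ℕ) : ℕ := if l % 3 = 1 ∧ l / 3 ∈ S then 1 else 0

def swp (S : Finset ℕ) (c : ℕ → ℕ) (j : ℕ) : ℕ :=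
  if j % 3 = 1 ∧ j / 3 ∈ S then c (j+1)
  else if j % 3 = 2 ∧ j / 3 ∈ S then c (j-1) else c j

lemma swp_eval0 (S : Finset ℕ) (c : ℕ → ℕ) {j : ℕ} (h : j % 3 = 0) : swp S c j = c j := by
  unfold swp; rw [if_neg (by omega), if_neg (by omega)]

lemma swp_eval1_mem (S : Finset ℕ) (c : ℕ → ℕ) {j : ℕ} (h : j % 3 = 1) (hm : j / 3 ∈ S) :
    swp S c j = c (j+1) := by
  unfold swp; rw [if_pos ⟨h, hm⟩]

lemma swp_eval1_not (S : Finset ℕ) (c : ℕ → ℕ) {j : ℕ} (h : j % 3 = 1) (hm : j / 3 ∉ S) :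
    swp S c j = c j := by
  unfold swp; rw [if_neg (by tauto), if_neg (by omega)]

lemma swp_eval2_mem (S : Finset ℕ) (c : ℕ → ℕ) {j : ℕ} (h : j % 3 = 2) (hm : j / 3 ∈ S) :
    swp S c j = c (j-1) := by
  unfold swp; rw [if_neg (by omega), if_pos ⟨h, hm⟩]

lemma swp_eval2_not (S : Finset ℕ) (c : ℕ → ℕ) {j : ℕ} (h : j % 3 = 2) (hm : j / 3 ∉ S) :
    swp S c j = c j := by
  unfold swp; rw [if_neg (by omega), if_neg (by tauto)]

lemma swp_cases (S : Finset ℕ) (c : ℕ → ℕ) (j : ℕ) :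
    swp S c j = c (j+1) ∨ swp S c j = c (j-1) ∨ swp S c j = c j := by
  unfold swp; split_ifs <;> tauto

lemma swp_congr (S : Finset ℕ) {c₁ c₂ : ℕ → ℕ} {j : ℕ}
    (h : ∀ j', j' ≤ j + 1 → c₁ j' = c₂ j') : swp S c₁ j = swp S c₂ j := by
  unfold swp; split_ifs <;> apply h <;> omega

lemma swp_swp (S : Finset ℕ) (c : ℕ → ℕ) (j : ℕ) : swp S (swp S c) j = c j := by
  have h3 : j % 3 = 0 ∨ j % 3 = 1 ∨ j % 3 = 2 := by omega
  rcases h3 with h | h | h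
  · rw [swp_eval0 _ _ h, swp_eval0 _ _ h]
  · by_cases hm : j / 3 ∈ S
    · rw [swp_eval1_mem _ _ h hm]
      have h2 : (j+1) % 3 = 2 := by omega
      have h3 : (j+1) / 3 = j / 3 := by omega
      rw [swp_eval2_mem _ _ h2 (h3 ▸ hm), show j+1-1 = j from by omega]
    · rw [swp_eval1_not _ _ h hm, swp_eval1_not _ _ h hm]
  · by_cases hm : j / 3 ∈ S
    · rw [swp_eval2_mem _ _ h hm]
      have h1 : (j-1) % 3 = 1 := by omega
      have h3 : (j-1) / 3 = j / 3 := by omega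
      rw [swp_eval1_mem _ _ h1 (h3 ▸ hm), show j-1+1 = j from by omega]
    · rw [swp_eval2_not _ _ h hm, swp_eval2_not _ _ h hm]

lemma sum_range_three_step (k : ℕ) (F : ℕ → ℕ) :
    ∑ j ∈ range (3*(k+1)+1), F j
      = ∑ j ∈ range (3*k+1), F j + F (3*k+1) + F (3*k+2) + F (3*k+3) := by
  rw [show 3*(k+1)+1 = (3*k+3)+1 from by omega, Finset.sum_range_succ,
    show 3*k+3 = (3*k+2)+1 from by omega, Finset.sum_range_succ,
    show 3*k+2 = (3*k+1)+1 from by omega, Finset.sum_range_succ]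

lemma sum_swp (k : ℕ) (S : Finset ℕ) (c : ℕ → ℕ) :
    ∑ j ∈ range (3*k+1), swp S c j = ∑ j ∈ range (3*k+1), c j := by
  induction k with
  | zero =>
    simp only [Nat.mul_zero, Nat.zero_add, Finset.sum_range_one]
    exact swp_eval0 _ _ (by omega)
  | succ k ih =>
    rw [sum_range_three_step k (swp S c), sum_range_three_step k c, ih]
    have e3 : swp S c (3*k+3) = c (3*k+3) := swp_eval0 _ _ (by omega)
    by_cases hm : k ∈ S
    · have e1 : swp S c (3*k+1) = c (3*k+2) := by
        rw [swp_eval1_mem _ _ (by omega) (by rwa [show (3*k+1)/3 = k by omega])]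
      have e2 : swp S c (3*k+2) = c (3*k+1) := by
        rw [swp_eval2_mem _ _ (by omega) (by rwa [show (3*k+2)/3 = k by omega]),
          show 3*k+2-1 = 3*k+1 from by omega]
      omega
    · have e1 : swp S c (3*k+1) = c (3*k+1) := by
        rw [swp_eval1_not _ _ (by omega) (by rwa [show (3*k+1)/3 = k by omega])]
      have e2 : swp S c (3*k+2) = c (3*k+2) := by
        rw [swp_eval2_not _ _ (by omega) (by rwa [show (3*k+2)/3 = k by omega])]
      omega

lemma sum_dlt' (k : ℕ) (S : Finset ℕ) :
    ∑ l ∈ range (3*k+1), (l+1) * dlt S l = ∑ i ∈ range k, if i ∈ S then 3*i+2 else 0 := by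
  induction k with
  | zero =>
    simp only [Nat.mul_zero, Nat.zero_add, Finset.sum_range_one, Finset.range_zero,
      Finset.sum_empty]
    unfold dlt
    rw [if_neg (by omega)]
    ring
  | succ k ih =>
    rw [sum_range_three_step k (fun l => (l+1) * dlt S l), ih, Finset.sum_range_succ]
    have e2 : dlt S (3*k+2) = 0 := by unfold dlt; rw [if_neg (by omega)]
    have e3 : dlt S (3*k+3) = 0 := by unfold dlt; rw [if_neg (by omega)]
    have e1 : dlt S (3*k+1) = if k ∈ S then 1 else 0 := by
      unfold dlt
      rw [show (3*k+1)/3 = k by omega]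
      by_cases hm : k ∈ S
      · rw [if_pos ⟨by omega, hm⟩, if_pos hm]
      · rw [if_neg (by tauto), if_neg hm]
    rw [e1, e2, e3]
    by_cases hm : k ∈ S <;> simp [hm]

lemma sum_dlt {k : ℕ} {S : Finset ℕ} (hS : S ⊆ range k) :
    ∑ l ∈ range (3*k+1), (l+1) * dlt S l = ∑ i ∈ S, (3*i+2) := by
  rw [sum_dlt', Finset.sum_ite_mem]
  congr 1
  rw [Finset.inter_eq_right.mpr hS]

def csum (r : ℕ) (g : ℕ → ℕ) (j : ℕ) : ℕ := ∑ l ∈ Finset.Ico j r, g l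

lemma csum_step {r j : ℕ} (g : ℕ → ℕ) (h : j < r) : csum r g j = g j + csum r g (j+1) := by
  unfold csum
  rw [Finset.sum_eq_sum_Ico_succ_bot h]

lemma csum_ge {r j : ℕ} (g : ℕ → ℕ) (h : r ≤ j) : csum r g j = 0 := by
  unfold csum
  rw [Finset.Ico_eq_empty (by omega), Finset.sum_empty]

lemma csum_anti (r : ℕ) (g : ℕ → ℕ) {j j' : ℕ} (h : j ≤ j') : csum r g j' ≤ csum r g j :=
  Finset.sum_le_sum_of_subset (Finset.Ico_subset_Ico h le_rfl)

lemma csum_total (r : ℕ) (g : ℕ → ℕ) :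
    ∑ j ∈ range r, csum r g j = ∑ l ∈ range r, (l+1) * g l := by
  induction r with
  | zero => simp
  | succ r ih =>
    have h1 : ∀ j ∈ range (r+1), csum (r+1) g j = csum r g j + g r := by
      intro j hj
      rw [mem_range] at hj
      unfold csum
      rw [Finset.sum_Ico_succ_top (by omega)]
    rw [Finset.sum_congr rfl h1, Finset.sum_add_distrib, Finset.sum_const, Finset.sum_range_succ,
      Finset.sum_range_succ, csum_ge g le_rfl, ih]
    simp only [card_range, smul_eq_mul]
    ring

lemma csum_eq_of {r : ℕ} {g C : ℕ → ℕ} (hC : C r = 0) (hg : ∀ l, l < r → g l + C (l+1) = C l) :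
    ∀ j, j ≤ r → csum r g j = C j := by
  have key : ∀ m j, j + m = r → csum r g j = C j := by
    intro m
    induction m with
    | zero =>
      intro j hj
      have : j = r := by omega
      subst this
      rw [csum_ge g le_rfl, hC]
    | succ m ih =>
      intro j hj
      rw [csum_step g (by omega), ih (j+1) (by omega), hg j (by omega)]
  intro j hj
  exact key (r - j) j (by omega)


def Sfun (k : ℕ) (A : ℕ → ℕ) : Finset ℕ := (range k).filter fun i => A (3*i+1) < A (3*i+2)

noncomputable def Fd (k n : ℕ) : Finset (Fin (3*k+1) → ℕ) :=
  (Fintype.piFinset fun _ => range (n+1)).filter fun a => IsDiamond k a ∧ ∑ i, a i = n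

noncomputable def FxS (k n : ℕ) (S : Finset ℕ) : Finset (Fin (3*k+1) → ℕ) :=
  (Fintype.piFinset fun _ => range (n+1)).filter
    fun x => (∑ i ∈ S, (3*i+2)) + ∑ j : Fin (3*k+1), ((j:ℕ)+1) * x j = n

def fwd (k : ℕ) (a : Fin (3*k+1) → ℕ) : Fin (3*k+1) → ℕ := fun l =>
  swp (Sfun k (ext (3*k+1) a)) (ext (3*k+1) a) l
    - swp (Sfun k (ext (3*k+1) a)) (ext (3*k+1) a) ((l:ℕ)+1)
    - dlt (Sfun k (ext (3*k+1) a)) l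

def bwd (k : ℕ) (S : Finset ℕ) (x : Fin (3*k+1) → ℕ) : Fin (3*k+1) → ℕ := fun j =>
  swp S (csum (3*k+1) (fun l => ext (3*k+1) x l + dlt S l)) j

lemma sum_ext {r : ℕ} (a : Fin r → ℕ) : ∑ j ∈ range r, ext r a j = ∑ i, a i := by
  rw [← Fin.sum_univ_eq_sum_range]
  apply Finset.sum_congr rfl
  intro i _
  rw [ext_lt a i.isLt, Fin.eta]

lemma sum_ext_w {r : ℕ} (x : Fin r → ℕ) :
    ∑ l ∈ range r, (l+1) * ext r x l = ∑ j : Fin r, ((j:ℕ)+1) * x j := by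
  rw [← Fin.sum_univ_eq_sum_range (f := fun l => (l+1) * ext r x l)]
  apply Finset.sum_congr rfl
  intro i _
  rw [ext_lt x i.isLt, Fin.eta]

lemma dia_A {k : ℕ} {a : Fin (3*k+1) → ℕ} (ha : IsDiamond k a) {i : ℕ} (hik : i < k) :
    ext (3*k+1) a (3*i+1) ≤ ext (3*k+1) a (3*i) ∧
    ext (3*k+1) a (3*i+2) ≤ ext (3*k+1) a (3*i) ∧
    ext (3*k+1) a (3*i+3) ≤ ext (3*k+1) a (3*i+1) ∧
    ext (3*k+1) a (3*i+3) ≤ ext (3*k+1) a (3*i+2) := by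
  have h := ha i hik
  rw [ext_lt a (show 3*i < 3*k+1 by omega), ext_lt a (show 3*i+1 < 3*k+1 by omega),
    ext_lt a (show 3*i+2 < 3*k+1 by omega), ext_lt a (show 3*i+3 < 3*k+1 by omega)]
  exact h

lemma k_notin {k : ℕ} {S : Finset ℕ} (hS : S ⊆ range k) : (3*k+1)/3 ∉ S := by
  rw [show (3*k+1)/3 = k from by omega]
  intro hm
  exact absurd (mem_range.mp (hS hm)) (lt_irrefl k)

lemma Sfun_subset (k : ℕ) (A : ℕ → ℕ) : Sfun k A ⊆ range k := Finset.filter_subset _ _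

lemma Sfun_mem {k : ℕ} {A : ℕ → ℕ} {i : ℕ} :
    i ∈ Sfun k A ↔ i < k ∧ A (3*i+1) < A (3*i+2) := by
  unfold Sfun; rw [mem_filter, mem_range]

lemma dia_chain {k : ℕ} {a : Fin (3*k+1) → ℕ} (ha : IsDiamond k a) :
    ∀ j < 3*k+1, swp (Sfun k (ext (3*k+1) a)) (ext (3*k+1) a) (j+1)
        + dlt (Sfun k (ext (3*k+1) a)) j
      ≤ swp (Sfun k (ext (3*k+1) a)) (ext (3*k+1) a) j := by
  intro j hj
  have hmod : j % 3 = 0 ∨ j % 3 = 1 ∨ j % 3 = 2 := by omega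
  rcases hmod with h | h | h
  · have hd : dlt (Sfun k (ext (3*k+1) a)) j = 0 := by unfold dlt; rw [if_neg (by omega)]
    rw [hd, swp_eval0 _ _ h, Nat.add_zero]
    obtain ⟨i, rfl⟩ : ∃ i, j = 3*i := ⟨j/3, by omega⟩
    rcases eq_or_lt_of_le (show i ≤ k by omega) with hik | hik
    · subst hik
      rw [swp_eval1_not _ _ (by omega) (k_notin (Sfun_subset _ _)), ext_ge a (by omega)]
      exact Nat.zero_le _
    · obtain ⟨h1, h2, _, _⟩ := dia_A ha hik
      by_cases hm : i ∈ Sfun k (ext (3*k+1) a)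
      · rw [swp_eval1_mem _ _ (show (3*i+1) % 3 = 1 by omega)
          (by rwa [show (3*i+1)/3 = i from by omega]),
          show 3*i+1+1 = 3*i+2 from by omega]
        exact h2
      · rw [swp_eval1_not _ _ (show (3*i+1) % 3 = 1 by omega)
          (by rwa [show (3*i+1)/3 = i from by omega])]
        exact h1
  · obtain ⟨i, rfl⟩ : ∃ i, j = 3*i+1 := ⟨j/3, by omega⟩
    have hik : i < k := by omega
    have hdiv1 : (3*i+1)/3 = i := by omega
    have hdiv2 : (3*i+2)/3 = i := by omega
    by_cases hm : i ∈ Sfun k (ext (3*k+1) a)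
    · have hlt : ext (3*k+1) a (3*i+1) < ext (3*k+1) a (3*i+2) := (Sfun_mem.mp hm).2
      have hd : dlt (Sfun k (ext (3*k+1) a)) (3*i+1) = 1 := by
        unfold dlt; rw [if_pos ⟨by omega, by rw [hdiv1]; exact hm⟩]
      have e1 : swp (Sfun k (ext (3*k+1) a)) (ext (3*k+1) a) (3*i+1)
          = ext (3*k+1) a (3*i+2) := by
        rw [swp_eval1_mem _ _ (by omega) (by rw [hdiv1]; exact hm),
          show 3*i+1+1 = 3*i+2 from by omega]
      have e2 : swp (Sfun k (ext (3*k+1) a)) (ext (3*k+1) a) (3*i+1+1)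
          = ext (3*k+1) a (3*i+1) := by
        rw [show 3*i+1+1 = 3*i+2 from by omega,
          swp_eval2_mem _ _ (by omega) (by rw [hdiv2]; exact hm),
          show 3*i+2-1 = 3*i+1 from by omega]
      omega
    · have hge : ¬ ext (3*k+1) a (3*i+1) < ext (3*k+1) a (3*i+2) := by
        intro hc; exact hm (Sfun_mem.mpr ⟨hik, hc⟩)
      have hd : dlt (Sfun k (ext (3*k+1) a)) (3*i+1) = 0 := by
        unfold dlt; rw [if_neg]; rw [hdiv1]; tauto
      have e1 : swp (Sfun k (ext (3*k+1) a)) (ext (3*k+1) a) (3*i+1)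
          = ext (3*k+1) a (3*i+1) := by
        rw [swp_eval1_not _ _ (by omega) (by rw [hdiv1]; exact hm)]
      have e2 : swp (Sfun k (ext (3*k+1) a)) (ext (3*k+1) a) (3*i+1+1)
          = ext (3*k+1) a (3*i+2) := by
        rw [show 3*i+1+1 = 3*i+2 from by omega,
          swp_eval2_not _ _ (by omega) (by rw [hdiv2]; exact hm)]
      omega
  · obtain ⟨i, rfl⟩ : ∃ i, j = 3*i+2 := ⟨j/3, by omega⟩
    have hik : i < k := by omega
    have hd : dlt (Sfun k (ext (3*k+1) a)) (3*i+2) = 0 := by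
      unfold dlt; rw [if_neg (by omega)]
    obtain ⟨_, _, h3, h4⟩ := dia_A ha hik
    rw [hd, Nat.add_zero, show 3*i+2+1 = 3*i+3 from by omega,
      swp_eval0 _ _ (show (3*i+3) % 3 = 0 by omega)]
    by_cases hm : i ∈ Sfun k (ext (3*k+1) a)
    · rw [swp_eval2_mem _ _ (show (3*i+2) % 3 = 2 by omega)
        (by rwa [show (3*i+2)/3 = i from by omega]),
        show 3*i+2-1 = 3*i+1 from by omega]
      exact h3
    · rw [swp_eval2_not _ _ (show (3*i+2) % 3 = 2 by omega)
        (by rwa [show (3*i+2)/3 = i from by omega])]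
      exact h4

lemma ppD_eq_card (k n : ℕ) : ppD k n = (Fd k n).card := by
  rw [← Nat.card_eq_finsetCard]
  apply Nat.card_congr
  apply Equiv.subtypeEquivRight
  intro a
  simp only [Fd, mem_filter, Fintype.mem_piFinset, mem_range]
  constructor
  · intro ⟨h1, h2⟩
    refine ⟨fun i => ?_, h1, h2⟩
    have := Finset.single_le_sum (f := a) (fun _ _ => Nat.zero_le _) (mem_univ i)
    omega
  · tauto

lemma FxS_card (k n : ℕ) (S : Finset ℕ) :
    (FxS k n S).card = if (∑ i ∈ S, (3*i+2)) ≤ n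
      then (cntF (3*k+1) (fun j => (j:ℕ)+1) (n - ∑ i ∈ S, (3*i+2))).card else 0 := by
  by_cases hle : (∑ i ∈ S, (3*i+2)) ≤ n
  · rw [if_pos hle]
    apply Finset.card_nbij' (i := fun x => x) (j := fun x => x)
    · intro x hx
      simp only [Finset.mem_coe, FxS, mem_filter, Fintype.mem_piFinset, mem_range] at hx
      obtain ⟨hb, hs⟩ := hx
      have heq : ∑ j : Fin (3*k+1), ((j:ℕ)+1) * x j = n - ∑ i ∈ S, (3*i+2) := by omega
      simp only [Finset.mem_coe, cntF, mem_filter, Fintype.mem_piFinset, mem_range]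
      refine ⟨fun i => ?_, heq⟩
      have h1 : ((i:ℕ)+1) * x i ≤ n - ∑ i ∈ S, (3*i+2) := heq ▸ Finset.single_le_sum
        (f := fun j : Fin (3*k+1) => ((j:ℕ)+1) * x j) (fun _ _ => Nat.zero_le _) (mem_univ i)
      have h2 : x i ≤ ((i:ℕ)+1) * x i := Nat.le_mul_of_pos_left _ (by omega)
      omega
    · intro x hx
      simp only [Finset.mem_coe, cntF, mem_filter, Fintype.mem_piFinset, mem_range] at hx
      obtain ⟨hb, hs⟩ := hx
      simp only [Finset.mem_coe, FxS, mem_filter, Fintype.mem_piFinset, mem_range]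
      exact ⟨fun i => by have := hb i; omega, by omega⟩
    · intro x _; rfl
    · intro x _; rfl
  · rw [if_neg hle]
    rw [Finset.card_eq_zero, Finset.eq_empty_iff_forall_notMem]
    intro x hx
    simp only [FxS, mem_filter] at hx
    omega

lemma bwd_ext {k : ℕ} (S : Finset ℕ) (hS : S ⊆ range k) (x : Fin (3*k+1) → ℕ) :
    ∀ j, j ≤ 3*k+1 → ext (3*k+1) (bwd k S x) j
      = swp S (csum (3*k+1) (fun l => ext (3*k+1) x l + dlt S l)) j := by
  intro j hj
  rcases lt_or_eq_of_le hj with hlt | rfl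
  · rw [ext_lt _ hlt]
    rfl
  · rw [ext_ge _ (lt_irrefl _),
      swp_eval1_not _ _ (by omega) (k_notin hS), csum_ge _ le_rfl]

lemma Sfun_bwd {k : ℕ} (S : Finset ℕ) (hS : S ⊆ range k) (x : Fin (3*k+1) → ℕ) :
    Sfun k (ext (3*k+1) (bwd k S x)) = S := by
  ext i
  rw [Sfun_mem]
  constructor
  · rintro ⟨hik, hlt⟩
    rw [bwd_ext S hS x _ (by omega), bwd_ext S hS x _ (by omega)] at hlt
    by_contra hm
    have hdiv1 : (3*i+1)/3 = i := by omega
    have hdiv2 : (3*i+2)/3 = i := by omega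
    rw [swp_eval1_not _ _ (by omega) (by rw [hdiv1]; exact hm),
      swp_eval2_not _ _ (by omega) (by rw [hdiv2]; exact hm)] at hlt
    exact absurd hlt (not_lt.mpr (csum_anti _ _ (by omega)))
  · intro hm
    have hik : i < k := mem_range.mp (hS hm)
    have hdiv1 : (3*i+1)/3 = i := by omega
    have hdiv2 : (3*i+2)/3 = i := by omega
    refine ⟨hik, ?_⟩
    rw [bwd_ext S hS x _ (by omega), bwd_ext S hS x _ (by omega),
      swp_eval1_mem _ _ (by omega) (by rw [hdiv1]; exact hm),
      swp_eval2_mem _ _ (by omega) (by rw [hdiv2]; exact hm),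
      show 3*i+1+1 = 3*i+2 from by omega, show 3*i+2-1 = 3*i+1 from by omega,
      csum_step _ (show 3*i+1 < 3*k+1 from by omega), show 3*i+1+1 = 3*i+2 from by omega]
    have hd : dlt S (3*i+1) = 1 := by
      unfold dlt; rw [if_pos ⟨by omega, by rw [hdiv1]; exact hm⟩]
    show csum (3*k+1) (fun l => ext (3*k+1) x l + dlt S l) (3*i+2)
        < ext (3*k+1) x (3*i+1) + dlt S (3*i+1)
          + csum (3*k+1) (fun l => ext (3*k+1) x l + dlt S l) (3*i+2)
    omega


lemma fwd_csum {k : ℕ} (a : Fin (3*k+1) → ℕ) (hdia : IsDiamond k a) (S : Finset ℕ)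
    (hfib : Sfun k (ext (3*k+1) a) = S) :
    ∀ j, j ≤ 3*k+1 →
      csum (3*k+1) (fun l => ext (3*k+1) (fwd k a) l + dlt S l) j
        = swp S (ext (3*k+1) a) j := by
  have hS : S ⊆ range k := hfib ▸ Sfun_subset k (ext (3*k+1) a)
  have hchain : ∀ j, j < 3*k+1 → swp S (ext (3*k+1) a) (j+1) + dlt S j
      ≤ swp S (ext (3*k+1) a) j := by
    intro j hj
    have h := dia_chain hdia j hj
    rwa [hfib] at h
  have hCr : swp S (ext (3*k+1) a) (3*k+1) = 0 := by
    rw [swp_eval1_not _ _ (by omega) (k_notin hS), ext_ge a (by omega)]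
  have hextfwd : ∀ l, l < 3*k+1 → ext (3*k+1) (fwd k a) l
      = swp S (ext (3*k+1) a) l - swp S (ext (3*k+1) a) (l+1) - dlt S l := by
    intro l hl
    rw [ext_lt _ hl]
    simp only [fwd, hfib]
  have hg : ∀ l, l < 3*k+1 →
      (ext (3*k+1) (fwd k a) l + dlt S l) + swp S (ext (3*k+1) a) (l+1)
        = swp S (ext (3*k+1) a) l := by
    intro l hl
    have h1 := hchain l hl
    rw [hextfwd l hl]
    omega
  exact csum_eq_of hCr hg

lemma hi_obl {k n : ℕ} (S : Finset ℕ) (hS : S ⊆ range k) :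
    ∀ a ∈ (Fd k n).filter (fun a => Sfun k (ext (3*k+1) a) = S), fwd k a ∈ FxS k n S := by
  intro a ha
  rw [mem_filter] at ha
  obtain ⟨haFd, hfib⟩ := ha
  rw [Fd, mem_filter, Fintype.mem_piFinset] at haFd
  obtain ⟨hb, hdia, hsum⟩ := haFd
  have hcs := fwd_csum a hdia S hfib
  have hCsum : ∑ j ∈ range (3*k+1), swp S (ext (3*k+1) a) j = n := by
    rw [← hfib, sum_swp, sum_ext, hsum]
  have htot : (∑ i ∈ S, (3*i+2)) + ∑ j : Fin (3*k+1), ((j:ℕ)+1) * fwd k a j = n := by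
    have h1 : ∑ l ∈ range (3*k+1), (l+1) * (ext (3*k+1) (fwd k a) l + dlt S l)
        = ∑ j ∈ range (3*k+1),
            csum (3*k+1) (fun l => ext (3*k+1) (fwd k a) l + dlt S l) j :=
      (csum_total _ _).symm
    rw [Finset.sum_congr rfl (fun j hj => hcs j (le_of_lt (mem_range.mp hj))), hCsum] at h1
    have h2 : ∑ l ∈ range (3*k+1), (l+1) * (ext (3*k+1) (fwd k a) l + dlt S l)
        = ∑ l ∈ range (3*k+1), (l+1) * ext (3*k+1) (fwd k a) l
          + ∑ l ∈ range (3*k+1), (l+1) * dlt S l := by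
      rw [← Finset.sum_add_distrib]
      exact Finset.sum_congr rfl (fun l _ => by ring)
    rw [h2, sum_dlt hS, sum_ext_w] at h1
    omega
  rw [FxS, mem_filter, Fintype.mem_piFinset]
  refine ⟨fun l => ?_, htot⟩
  rw [mem_range]
  have h3 : ext (3*k+1) (fwd k a) (l:ℕ)
      = swp S (ext (3*k+1) a) (l:ℕ) - swp S (ext (3*k+1) a) ((l:ℕ)+1) - dlt S (l:ℕ) := by
    rw [ext_lt _ l.isLt]
    simp only [fwd, hfib]
  rw [ext_lt _ l.isLt, Fin.eta] at h3
  have h4 : swp S (ext (3*k+1) a) (l:ℕ) ≤ ∑ j ∈ range (3*k+1), swp S (ext (3*k+1) a) j :=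
    Finset.single_le_sum (f := fun j => swp S (ext (3*k+1) a) j)
      (fun _ _ => Nat.zero_le _) (mem_range.mpr l.isLt)
  omega

lemma hj_obl {k n : ℕ} (S : Finset ℕ) (hS : S ⊆ range k) :
    ∀ x ∈ FxS k n S, bwd k S x ∈ (Fd k n).filter (fun a => Sfun k (ext (3*k+1) a) = S) := by
  intro x hx
  rw [FxS, mem_filter, Fintype.mem_piFinset] at hx
  obtain ⟨hb, heq⟩ := hx
  have hCtot : ∑ j ∈ range (3*k+1), csum (3*k+1) (fun l => ext (3*k+1) x l + dlt S l) j = n := by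
    rw [csum_total]
    have h2 : ∑ l ∈ range (3*k+1), (l+1) * (ext (3*k+1) x l + dlt S l)
        = ∑ l ∈ range (3*k+1), (l+1) * ext (3*k+1) x l
          + ∑ l ∈ range (3*k+1), (l+1) * dlt S l := by
      rw [← Finset.sum_add_distrib]
      exact Finset.sum_congr rfl (fun l _ => by ring)
    rw [h2, sum_dlt hS, sum_ext_w]
    omega
  have hCn : ∀ j, csum (3*k+1) (fun l => ext (3*k+1) x l + dlt S l) j ≤ n := by
    intro j
    rcases le_or_gt (3*k+1) j with hge | hlt
    · rw [csum_ge _ hge]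
      omega
    · calc csum (3*k+1) (fun l => ext (3*k+1) x l + dlt S l) j ≤ csum (3*k+1) (fun l => ext (3*k+1) x l + dlt S l) 0 := csum_anti _ _ (Nat.zero_le _)
        _ ≤ ∑ j ∈ range (3*k+1), csum (3*k+1) (fun l => ext (3*k+1) x l + dlt S l) j :=
          Finset.single_le_sum (f := fun j => csum (3*k+1) (fun l => ext (3*k+1) x l + dlt S l) j)
            (fun _ _ => Nat.zero_le _) (mem_range.mpr (by omega))
        _ = n := hCtot
  rw [mem_filter, Fd, mem_filter, Fintype.mem_piFinset]
  refine ⟨⟨fun j => ?_, ?_, ?_⟩, Sfun_bwd S hS x⟩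
  · rw [mem_range]
    show swp S (csum (3*k+1) (fun l => ext (3*k+1) x l + dlt S l)) (j:ℕ) < n+1
    rcases swp_cases S (csum (3*k+1) (fun l => ext (3*k+1) x l + dlt S l)) (j:ℕ) with h|h|h <;> rw [h]
    · have := hCn ((j:ℕ)+1); omega
    · have := hCn ((j:ℕ)-1); omega
    · have := hCn (j:ℕ); omega
  · intro i hik
    have hdiv1 : (3*i+1)/3 = i := by omega
    have hdiv2 : (3*i+2)/3 = i := by omega
    have hm01 : csum (3*k+1) (fun l => ext (3*k+1) x l + dlt S l) (3*i+1) ≤ csum (3*k+1) (fun l => ext (3*k+1) x l + dlt S l) (3*i) := csum_anti _ _ (by omega)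
    have hm12 : csum (3*k+1) (fun l => ext (3*k+1) x l + dlt S l) (3*i+2) ≤ csum (3*k+1) (fun l => ext (3*k+1) x l + dlt S l) (3*i+1) := csum_anti _ _ (by omega)
    have hm23 : csum (3*k+1) (fun l => ext (3*k+1) x l + dlt S l) (3*i+3) ≤ csum (3*k+1) (fun l => ext (3*k+1) x l + dlt S l) (3*i+2) := csum_anti _ _ (by omega)
    have e0 : swp S (csum (3*k+1) (fun l => ext (3*k+1) x l + dlt S l)) (3*i) = csum (3*k+1) (fun l => ext (3*k+1) x l + dlt S l) (3*i) := swp_eval0 _ _ (by omega)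
    have e3 : swp S (csum (3*k+1) (fun l => ext (3*k+1) x l + dlt S l)) (3*i+3) = csum (3*k+1) (fun l => ext (3*k+1) x l + dlt S l) (3*i+3) := swp_eval0 _ _ (by omega)
    have e12 : (swp S (csum (3*k+1) (fun l => ext (3*k+1) x l + dlt S l)) (3*i+1) = csum (3*k+1) (fun l => ext (3*k+1) x l + dlt S l) (3*i+1) ∧ swp S (csum (3*k+1) (fun l => ext (3*k+1) x l + dlt S l)) (3*i+2) = csum (3*k+1) (fun l => ext (3*k+1) x l + dlt S l) (3*i+2))
        ∨ (swp S (csum (3*k+1) (fun l => ext (3*k+1) x l + dlt S l)) (3*i+1) = csum (3*k+1) (fun l => ext (3*k+1) x l + dlt S l) (3*i+2) ∧ swp S (csum (3*k+1) (fun l => ext (3*k+1) x l + dlt S l)) (3*i+2) = csum (3*k+1) (fun l => ext (3*k+1) x l + dlt S l) (3*i+1)) := by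
      by_cases hm : i ∈ S
      · right
        constructor
        · rw [swp_eval1_mem _ _ (by omega) (by rw [hdiv1]; exact hm),
            show 3*i+1+1 = 3*i+2 from by omega]
        · rw [swp_eval2_mem _ _ (by omega) (by rw [hdiv2]; exact hm),
            show 3*i+2-1 = 3*i+1 from by omega]
      · left
        constructor
        · rw [swp_eval1_not _ _ (by omega) (by rw [hdiv1]; exact hm)]
        · rw [swp_eval2_not _ _ (by omega) (by rw [hdiv2]; exact hm)]
    refine ⟨?_, ?_, ?_, ?_⟩
    · show swp S (csum (3*k+1) (fun l => ext (3*k+1) x l + dlt S l)) (3*i+1) ≤ swp S (csum (3*k+1) (fun l => ext (3*k+1) x l + dlt S l)) (3*i)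
      rcases e12 with ⟨h1, h2⟩ | ⟨h1, h2⟩ <;> omega
    · show swp S (csum (3*k+1) (fun l => ext (3*k+1) x l + dlt S l)) (3*i+2) ≤ swp S (csum (3*k+1) (fun l => ext (3*k+1) x l + dlt S l)) (3*i)
      rcases e12 with ⟨h1, h2⟩ | ⟨h1, h2⟩ <;> omega
    · show swp S (csum (3*k+1) (fun l => ext (3*k+1) x l + dlt S l)) (3*i+3) ≤ swp S (csum (3*k+1) (fun l => ext (3*k+1) x l + dlt S l)) (3*i+1)
      rcases e12 with ⟨h1, h2⟩ | ⟨h1, h2⟩ <;> omega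
    · show swp S (csum (3*k+1) (fun l => ext (3*k+1) x l + dlt S l)) (3*i+3) ≤ swp S (csum (3*k+1) (fun l => ext (3*k+1) x l + dlt S l)) (3*i+2)
      rcases e12 with ⟨h1, h2⟩ | ⟨h1, h2⟩ <;> omega
  · show ∑ j : Fin (3*k+1), swp S (csum (3*k+1) (fun l => ext (3*k+1) x l + dlt S l)) (j:ℕ) = n
    rw [Fin.sum_univ_eq_sum_range (f := fun j => swp S (csum (3*k+1) (fun l => ext (3*k+1) x l + dlt S l)) j), sum_swp, hCtot]

lemma fiber_card (k n : ℕ) (S : Finset ℕ) (hS : S ⊆ range k) :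
    ((Fd k n).filter (fun a => Sfun k (ext (3*k+1) a) = S)).card = (FxS k n S).card := by
  apply Finset.card_nbij' (i := fwd k) (j := bwd k S) (hi_obl S hS) (hj_obl S hS)
  · intro a ha
    rw [Finset.mem_coe, mem_filter] at ha
    obtain ⟨haFd, hfib⟩ := ha
    rw [Fd, mem_filter, Fintype.mem_piFinset] at haFd
    obtain ⟨hb, hdia, hsum⟩ := haFd
    have hcs := fwd_csum a hdia S hfib
    funext j
    show swp S (csum (3*k+1) (fun l => ext (3*k+1) (fwd k a) l + dlt S l)) (j:ℕ) = a j
    have h1 : swp S (csum (3*k+1) (fun l => ext (3*k+1) (fwd k a) l + dlt S l)) (j:ℕ)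
        = swp S (swp S (ext (3*k+1) a)) (j:ℕ) :=
      swp_congr S (fun j' hj' => hcs j' (by have := j.isLt; omega))
    rw [h1, swp_swp, ext_lt a j.isLt, Fin.eta]
  · intro x hx
    simp only [Finset.mem_coe, FxS, mem_filter, Fintype.mem_piFinset] at hx
    obtain ⟨hb, heq⟩ := hx
    have hA' := bwd_ext S hS x
    have hSf : Sfun k (ext (3*k+1) (bwd k S x)) = S := Sfun_bwd S hS x
    have hCC : ∀ j', j' ≤ 3*k+1 → swp S (ext (3*k+1) (bwd k S x)) j' = csum (3*k+1) (fun l => ext (3*k+1) x l + dlt S l) j' := by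
      intro j' hj'
      rcases lt_or_eq_of_le hj' with hlt | rfl
      · have h1 : swp S (ext (3*k+1) (bwd k S x)) j' = swp S (swp S (csum (3*k+1) (fun l => ext (3*k+1) x l + dlt S l))) j' :=
          swp_congr S (fun j'' hj'' => hA' j'' (by omega))
        rw [h1, swp_swp]
      · rw [swp_eval1_not _ _ (by omega) (k_notin hS), hA' _ le_rfl,
          swp_eval1_not _ _ (by omega) (k_notin hS)]
    funext l
    show swp (Sfun k (ext (3*k+1) (bwd k S x))) (ext (3*k+1) (bwd k S x)) (l:ℕ)
        - swp (Sfun k (ext (3*k+1) (bwd k S x))) (ext (3*k+1) (bwd k S x)) ((l:ℕ)+1)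
        - dlt (Sfun k (ext (3*k+1) (bwd k S x))) (l:ℕ) = x l
    rw [hSf, hCC _ (le_of_lt l.isLt), hCC _ (by have := l.isLt; omega)]
    have hstep : csum (3*k+1) (fun l => ext (3*k+1) x l + dlt S l) (l:ℕ) = (ext (3*k+1) x (l:ℕ) + dlt S (l:ℕ)) + csum (3*k+1) (fun l => ext (3*k+1) x l + dlt S l) ((l:ℕ)+1) :=
      csum_step _ l.isLt
    have hex : ext (3*k+1) x (l:ℕ) = x l := by rw [ext_lt x l.isLt, Fin.eta]
    omega

lemma master (k n : ℕ) :
    ppD k n = ∑ S ∈ (range k).powerset,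
      if (∑ i ∈ S, (3*i+2)) ≤ n then cnt (3*k+1) (fun j => (j:ℕ)+1) (n - ∑ i ∈ S, (3*i+2))
      else 0 := by
  rw [ppD_eq_card]
  rw [Finset.card_eq_sum_card_fiberwise (f := fun a => Sfun k (ext (3*k+1) a))
    (t := (range k).powerset) (fun a _ => mem_powerset.mpr (Sfun_subset _ _))]
  apply Finset.sum_congr rfl
  intro S hSmem
  have hS : S ⊆ range k := mem_powerset.mp hSmem
  rw [fiber_card k n S hS, FxS_card]
  split
  · rw [cnt_eq_card _ _ (fun j => by omega)]
  · rfl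

lemma prod_one_add_pow (k : ℕ) :
    ∏ i ∈ range k, (1 + (X : PowerSeries ℤ)^(3*i+2))
      = ∑ S ∈ (range k).powerset, (X : PowerSeries ℤ)^(∑ i ∈ S, (3*i+2)) := by
  calc ∏ i ∈ range k, (1 + (X:PowerSeries ℤ)^(3*i+2))
      = ∏ i ∈ range k, ((X:PowerSeries ℤ)^(3*i+2) + 1) :=
        Finset.prod_congr rfl (fun i _ => add_comm _ _)
    _ = ∑ t ∈ (range k).powerset,
          (∏ i ∈ t, (X:PowerSeries ℤ)^(3*i+2)) * ∏ i ∈ (range k)\t, 1 :=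
        Finset.prod_add _ _ _
    _ = ∑ S ∈ (range k).powerset, (X : PowerSeries ℤ)^(∑ i ∈ S, (3*i+2)) := by
        apply Finset.sum_congr rfl
        intro t _
        rw [Finset.prod_const_one, mul_one, Finset.prod_pow_eq_pow_sum]

lemma mkppD (k : ℕ) :
    (PowerSeries.mk fun n => (ppD k n : ℤ))
      = (∏ i ∈ range k, (1 + (X : PowerSeries ℤ)^(3*i+2))) *
        (PowerSeries.mk fun n => (cnt (3*k+1) (fun j => (j:ℕ)+1) n : ℤ)) := by
  rw [prod_one_add_pow, Finset.sum_mul]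
  ext n
  rw [coeff_mk, map_sum, master k n]
  push_cast
  apply Finset.sum_congr rfl
  intro S _
  rw [mul_comm ((X : PowerSeries ℤ) ^ (∑ i ∈ S, (3*i+2))), PowerSeries.coeff_mul_X_pow', coeff_mk]

lemma prod_Fin_Icc (k : ℕ) :
    (∏ i : Fin (3*k+1), (1 - (X : PowerSeries ℤ) ^ ((i:ℕ)+1)))
      = ∏ j ∈ Icc 1 (3*k+1), (1 - (X : PowerSeries ℤ)^j) := by
  rw [Fin.prod_univ_eq_prod_range (fun l => 1 - (X:PowerSeries ℤ)^(l+1)) (3*k+1)]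
  have himg : Icc 1 (3*k+1) = (range (3*k+1)).image (fun i => i+1) := by
    ext j
    simp only [mem_Icc, mem_image, mem_range]
    constructor
    · intro h; exact ⟨j-1, by omega, by omega⟩
    · rintro ⟨i, hi, rfl⟩; omega
  rw [himg, Finset.prod_image (fun a _ b _ h => by omega)]

lemma main (k : ℕ) :
    (PowerSeries.mk fun n => (ppD k n : ℤ)) *
        ∏ j ∈ Icc 1 (3*k+1), (1 - (X:PowerSeries ℤ)^j)
      = ∏ i ∈ range k, (1 + (X:PowerSeries ℤ)^(3*i+2)) := by
  rw [mkppD, mul_assoc, ← prod_Fin_Icc,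
    key (3*k+1) (fun j => (j:ℕ)+1) (fun j => Nat.succ_pos _), mul_one]

lemma pair_prod {i : ℕ} (hi : 1 ≤ i) :
    (1 - (X:PowerSeries ℤ)^(3*i-1)) * (1 + (X:PowerSeries ℤ)^(3*i-1))
      = 1 - (X:PowerSeries ℤ)^(6*i-2) := by
  rw [show 6*i-2 = (3*i-1) + (3*i-1) from by omega, pow_add]
  ring

lemma filter_eq_image (k : ℕ) (hk : 1 ≤ k) :
    (Icc 1 (3*k+1)).filter (fun j => j % 6 = 4)
      = (Icc 1 (alphaK k)).image (fun i => 6*i-2) := by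
  ext j
  simp only [mem_filter, mem_Icc, mem_image, alphaK]
  constructor
  · rintro ⟨⟨h1, h2⟩, h3⟩
    exact ⟨j/6+1, by omega, by omega⟩
  · rintro ⟨i, ⟨hi1, hi2⟩, rfl⟩
    omega

lemma hsplit (k : ℕ) (hk : 1 ≤ k) :
    ((∏ i ∈ Icc 1 (alphaK k), (1 - (X:PowerSeries ℤ)^(3*i-1))) *
      ∏ i ∈ Icc 1 (alphaK k), (1 + (X:PowerSeries ℤ)^(3*i-1))) *
      ∏ i ∈ setA k, (1 - (X:PowerSeries ℤ)^i)
    = ∏ j ∈ Icc 1 (3*k+1), (1 - (X:PowerSeries ℤ)^j) := by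
  have hsetA : setA k = (Icc 1 (3*k+1)).filter (fun j => ¬ j % 6 = 4) := by
    unfold setA
    apply Finset.filter_congr
    intro j _
    simp [Ne]
  rw [← Finset.prod_mul_distrib,
    Finset.prod_congr rfl (fun i hi => pair_prod (mem_Icc.mp hi).1),
    ← Finset.prod_filter_mul_prod_filter_not (Icc 1 (3*k+1)) (fun j => j % 6 = 4)
      (fun j => 1 - (X:PowerSeries ℤ)^j)]
  congr 1
  · rw [filter_eq_image k hk, Finset.prod_image (fun a ha b hb h => by
      have h1 := (mem_Icc.mp ha).1
      have h2 := (mem_Icc.mp hb).1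
      omega)]

lemma range_to_Icc (k : ℕ) :
    (∏ i ∈ range k, (1 + (X:PowerSeries ℤ)^(3*i+2)))
      = ∏ i ∈ Icc 1 k, (1 + (X:PowerSeries ℤ)^(3*i-1)) := by
  have himg : Icc 1 k = (range k).image (fun i => i+1) := by
    ext j
    simp only [mem_Icc, mem_image, mem_range]
    constructor
    · intro h; exact ⟨j-1, by omega, by omega⟩
    · rintro ⟨i, hi, rfl⟩; omega
  rw [himg, Finset.prod_image (fun a _ b _ h => by omega)]
  exact Finset.prod_congr rfl (fun i _ => by rw [show 3*(i+1)-1 = 3*i+2 from by omega])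

lemma Icc_split (k : ℕ) (hk : 1 ≤ k) :
    (∏ i ∈ Icc 1 (alphaK k), (1 + (X:PowerSeries ℤ)^(3*i-1))) *
      ∏ i ∈ Icc (alphaK k + 1) k, (1 + (X:PowerSeries ℤ)^(3*i-1))
    = ∏ i ∈ Icc 1 k, (1 + (X:PowerSeries ℤ)^(3*i-1)) := by
  have hα : alphaK k ≤ k := by unfold alphaK; omega
  have hIoc : ∀ a b : ℕ, Icc (a+1) b = Ioc a b := by
    intro a b
    ext x
    simp only [mem_Icc, mem_Ioc]
    omega
  rw [show Icc 1 (alphaK k) = Ioc 0 (alphaK k) from hIoc 0 _,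
    show Icc (alphaK k + 1) k = Ioc (alphaK k) k from hIoc _ _,
    show Icc 1 k = Ioc 0 k from hIoc 0 _]
  exact Finset.prod_Ioc_consecutive _ (Nat.zero_le _) hα

lemma prod_ne (k : ℕ) : (∏ i ∈ Icc 1 (alphaK k), (1 + (X:PowerSeries ℤ)^(3*i-1))) ≠ 0 := by
  have hfac : ∀ i ∈ Icc 1 (alphaK k),
      constantCoeff (1 + (X:PowerSeries ℤ)^(3*i-1)) = 1 := by
    intro i hi
    have h2 : 3*i-1 ≠ 0 := by have := (mem_Icc.mp hi).1; omega
    simp [zero_pow h2]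
  have h1 : constantCoeff (∏ i ∈ Icc 1 (alphaK k), (1 + (X:PowerSeries ℤ)^(3*i-1))) = 1 := by
    rw [map_prod, Finset.prod_congr rfl hfac, Finset.prod_const_one]
  intro h
  rw [h, map_zero] at h1
  simp at h1

end AuxPPD


/-- the reduced generating function identity
`(∑ D_k(n) qⁿ) · ∏_{i=1}^{α_k} (1 − q^{3i−1}) · ∏_{i ∈ A_k} (1 − qⁱ)
  = ∏_{i=α_k+1}^{k} (1 + q^{3i−1})` in `ℤ[[q]]`. -/
theorem stmt10 (k : ℕ) (hk : 1 ≤ k) :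
    (PowerSeries.mk fun n => (ppD k n : ℤ)) *
        (∏ i ∈ Finset.Icc 1 (alphaK k), (1 - (PowerSeries.X : PowerSeries ℤ) ^ (3 * i - 1))) *
        (∏ i ∈ setA k, (1 - (PowerSeries.X : PowerSeries ℤ) ^ i))
      = ∏ i ∈ Finset.Icc (alphaK k + 1) k,
          (1 + (PowerSeries.X : PowerSeries ℤ) ^ (3 * i - 1)) := by
  apply mul_right_cancel₀ (AuxPPD.prod_ne k)
  calc (PowerSeries.mk fun n => (ppD k n : ℤ)) *
        (∏ i ∈ Finset.Icc 1 (alphaK k), (1 - (PowerSeries.X : PowerSeries ℤ) ^ (3 * i - 1))) *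
        (∏ i ∈ setA k, (1 - (PowerSeries.X : PowerSeries ℤ) ^ i)) *
        (∏ i ∈ Finset.Icc 1 (alphaK k), (1 + (PowerSeries.X : PowerSeries ℤ) ^ (3 * i - 1)))
      = (PowerSeries.mk fun n => (ppD k n : ℤ)) *
        (((∏ i ∈ Finset.Icc 1 (alphaK k), (1 - (PowerSeries.X : PowerSeries ℤ) ^ (3 * i - 1))) *
          ∏ i ∈ Finset.Icc 1 (alphaK k), (1 + (PowerSeries.X : PowerSeries ℤ) ^ (3 * i - 1))) *
          ∏ i ∈ setA k, (1 - (PowerSeries.X : PowerSeries ℤ) ^ i)) := by ring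
    _ = (PowerSeries.mk fun n => (ppD k n : ℤ)) *
          ∏ j ∈ Finset.Icc 1 (3*k+1), (1 - (PowerSeries.X : PowerSeries ℤ)^j) := by
        rw [AuxPPD.hsplit k hk]
    _ = ∏ i ∈ Finset.range k, (1 + (PowerSeries.X : PowerSeries ℤ)^(3*i+2)) := AuxPPD.main k
    _ = ∏ i ∈ Finset.Icc 1 k, (1 + (PowerSeries.X : PowerSeries ℤ)^(3*i-1)) :=
        AuxPPD.range_to_Icc k
    _ = (∏ i ∈ Finset.Icc (alphaK k + 1) k,
          (1 + (PowerSeries.X : PowerSeries ℤ) ^ (3 * i - 1))) *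
        (∏ i ∈ Finset.Icc 1 (alphaK k), (1 + (PowerSeries.X : PowerSeries ℤ) ^ (3 * i - 1))) := by
        rw [← AuxPPD.Icc_split k hk]
        ring
end

section
/- The following identity of formal power series in q holds: ( Σ_{n=0}^{∞} D_1(n) q^n ) · (1 − q)(1 − q^2)^2(1 − q^3) = 1; equivalently, the generating function of D_1(n) is 1/((1−q)(1−q^2)^2(1−q^3)). -/
open Finset

noncomputable def cnt {α : Type} (f : α → ℕ) (n : ℕ) : ℕ := Nat.card {x : α // f x = n}

def peelEquiv {α : Type} (f : α → ℕ) (a n : ℕ) :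
    {q : ℕ × α // a * q.1 + f q.2 = n} ≃
      ({x : α // f x = n} ⊕ {q : ℕ × α // a * q.1 + f q.2 + a = n}) where
  toFun q := match q with
    | ⟨(0, x), h⟩ => Sum.inl ⟨x, by simpa using h⟩
    | ⟨(j+1, x), h⟩ => Sum.inr ⟨(j, x), by
        show a * j + f x + a = n
        have h' : a * (j + 1) + f x = n := h
        rw [Nat.mul_succ] at h'; omega⟩
  invFun y := match y with
    | Sum.inl ⟨x, h⟩ => ⟨(0, x), by simpa using h⟩
    | Sum.inr ⟨(j, x), h⟩ => ⟨(j+1, x), by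
        show a * (j + 1) + f x = n
        have h' : a * j + f x + a = n := h
        rw [Nat.mul_succ]; omega⟩
  left_inv := by rintro ⟨⟨(_|j), x⟩, h⟩ <;> rfl
  right_inv := by rintro (⟨x, h⟩ | ⟨⟨j, x⟩, h⟩) <;> rfl

lemma peelFinite {α : Type} (f : α → ℕ) (a : ℕ) (ha : 0 < a)
    (hf : ∀ m, Finite {x : α // f x = m}) (n : ℕ) :
    Finite {q : ℕ × α // a * q.1 + f q.2 = n} := by
  haveI : ∀ k : Fin (n + 1), Finite {x : α // f x = n - a * (k : ℕ)} := fun k => hf _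
  apply Finite.of_injective
    (fun q : {q : ℕ × α // a * q.1 + f q.2 = n} =>
      (⟨⟨q.1.1, by
          have h := q.2
          have h2 : q.1.1 ≤ a * q.1.1 := Nat.le_mul_of_pos_left _ ha
          omega⟩,
        ⟨q.1.2, by
          show f q.1.2 = n - a * q.1.1
          have h := q.2; omega⟩⟩ :
        (k : Fin (n+1)) × {x : α // f x = n - a * (k : ℕ)}))
  rintro ⟨⟨j1, x1⟩, h1⟩ ⟨⟨j2, x2⟩, h2⟩ h
  obtain ⟨h3, h4⟩ := Sigma.mk.inj_iff.mp h
  have hj : j1 = j2 := by simpa using congrArg Fin.val h3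
  subst hj
  have hx : x1 = x2 := by simpa using h4
  subst hx; rfl

lemma card_plus_eq {α : Type} (f : α → ℕ) (a : ℕ) (n : ℕ) :
    Nat.card {x : α // f x + a = n} = if a ≤ n then cnt f (n - a) else 0 := by
  split_ifs with hle
  · exact Nat.card_congr (Equiv.subtypeEquivRight (fun x => by omega))
  · haveI : IsEmpty {x : α // f x + a = n} :=
      ⟨fun x => hle (by have := x.2; omega)⟩
    simp [Nat.card_of_isEmpty]

lemma cnt_rec {α : Type} (f : α → ℕ) (a : ℕ) (ha : 0 < a)
    (hf : ∀ m, Finite {x : α // f x = m}) (n : ℕ) :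
    cnt (fun q : ℕ × α => a * q.1 + f q.2) n =
      cnt f n + if a ≤ n then cnt (fun q : ℕ × α => a * q.1 + f q.2) (n - a) else 0 := by
  have hQ : ∀ m, Finite {q : ℕ × α // a * q.1 + f q.2 = m} := peelFinite f a ha hf
  haveI := hf n
  haveI : Finite {q : ℕ × α // a * q.1 + f q.2 + a = n} := by
    rcases le_or_gt a n with hle | hlt
    · haveI := hQ (n - a)
      exact Finite.of_equiv {q : ℕ × α // a * q.1 + f q.2 = n - a}
        (Equiv.subtypeEquivRight (fun q => by omega))
    · haveI : IsEmpty {q : ℕ × α // a * q.1 + f q.2 + a = n} :=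
        ⟨fun q => by have := q.2; omega⟩
      infer_instance
  rw [show cnt (fun q : ℕ × α => a * q.1 + f q.2) n = _ from
    Nat.card_congr (peelEquiv f a n), Nat.card_sum]
  congr 1
  exact card_plus_eq (fun q : ℕ × α => a * q.1 + f q.2) a n

open PowerSeries

lemma series_peel (E F : ℕ → ℕ) (a : ℕ)
    (h : ∀ n, E n = F n + if a ≤ n then E (n - a) else 0) :
    (PowerSeries.mk fun n => (E n : ℤ)) * (1 - PowerSeries.X ^ a) =
      PowerSeries.mk fun n => (F n : ℤ) := by
  ext n
  rw [mul_sub, mul_one, map_sub, PowerSeries.coeff_mul_X_pow']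
  simp only [PowerSeries.coeff_mk]
  have hn := h n
  split_ifs with hle
  · rw [if_pos hle] at hn
    omega
  · rw [if_neg hle] at hn
    omega

def f0 : Unit → ℕ := fun _ => 0
def f1 : ℕ × Unit → ℕ := fun q => 1 * q.1 + f0 q.2
def f2 : ℕ × (ℕ × Unit) → ℕ := fun q => 2 * q.1 + f1 q.2
def f3 : ℕ × (ℕ × (ℕ × Unit)) → ℕ := fun q => 3 * q.1 + f2 q.2
def f4 : ℕ × (ℕ × (ℕ × (ℕ × Unit))) → ℕ := fun q => 4 * q.1 + f3 q.2

lemma fin0 : ∀ m, Finite {x : Unit // f0 x = m} := fun _ => inferInstance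
lemma fin1 : ∀ m, Finite {x : ℕ × Unit // f1 x = m} := fun m => by
  show Finite {q : ℕ × Unit // 1 * q.1 + f0 q.2 = m}
  exact peelFinite f0 1 one_pos fin0 m
lemma fin2 : ∀ m, Finite {x : ℕ × (ℕ × Unit) // f2 x = m} := fun m => by
  show Finite {q : ℕ × (ℕ × Unit) // 2 * q.1 + f1 q.2 = m}
  exact peelFinite f1 2 two_pos fin1 m
lemma fin3 : ∀ m, Finite {x : ℕ × (ℕ × (ℕ × Unit)) // f3 x = m} := fun m => by
  show Finite {q : ℕ × (ℕ × (ℕ × Unit)) // 3 * q.1 + f2 q.2 = m}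
  exact peelFinite f2 3 three_pos fin2 m
lemma fin4 : ∀ m, Finite {x : ℕ × (ℕ × (ℕ × (ℕ × Unit))) // f4 x = m} := fun m => by
  show Finite {q : ℕ × (ℕ × (ℕ × (ℕ × Unit))) // 4 * q.1 + f3 q.2 = m}
  exact peelFinite f3 4 four_pos fin3 m

lemma S1 : (PowerSeries.mk fun n => (cnt f1 n : ℤ)) * (1 - PowerSeries.X) =
    PowerSeries.mk fun n => (cnt f0 n : ℤ) := by
  have := series_peel (cnt f1) (cnt f0) 1 (fun n => by
    show cnt f1 n = _ + _
    exact cnt_rec f0 1 one_pos fin0 n)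
  simpa using this

lemma S2 : (PowerSeries.mk fun n => (cnt f2 n : ℤ)) * (1 - PowerSeries.X ^ 2) =
    PowerSeries.mk fun n => (cnt f1 n : ℤ) :=
  series_peel (cnt f2) (cnt f1) 2 (fun n => by
    show cnt f2 n = _ + _
    exact cnt_rec f1 2 two_pos fin1 n)

lemma S3 : (PowerSeries.mk fun n => (cnt f3 n : ℤ)) * (1 - PowerSeries.X ^ 3) =
    PowerSeries.mk fun n => (cnt f2 n : ℤ) :=
  series_peel (cnt f3) (cnt f2) 3 (fun n => by
    show cnt f3 n = _ + _
    exact cnt_rec f2 3 three_pos fin2 n)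

lemma S4 : (PowerSeries.mk fun n => (cnt f4 n : ℤ)) * (1 - PowerSeries.X ^ 4) =
    PowerSeries.mk fun n => (cnt f3 n : ℤ) :=
  series_peel (cnt f4) (cnt f3) 4 (fun n => by
    show cnt f4 n = _ + _
    exact cnt_rec f3 4 four_pos fin3 n)

lemma S0 : (PowerSeries.mk fun n => (cnt f0 n : ℤ)) = 1 := by
  ext n
  rw [PowerSeries.coeff_mk, PowerSeries.coeff_one]
  rcases n with _ | n
  · simp only [if_pos rfl]
    have : cnt f0 0 = 1 := by
      rw [cnt]
      haveI : Unique {x : Unit // f0 x = 0} :=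
        ⟨⟨⟨(), rfl⟩⟩, fun x => Subtype.ext (Subsingleton.elim _ _)⟩
      exact Nat.card_unique
    rw [this]; norm_num
  · have : cnt f0 (n+1) = 0 := by
      rw [cnt]
      haveI : IsEmpty {x : Unit // f0 x = n + 1} := ⟨fun x => by have := x.2; simp [f0] at this⟩
      exact Nat.card_of_isEmpty
    simp [this]


abbrev T4 : Type := ℕ × (ℕ × (ℕ × (ℕ × Unit)))

def dEquiv (n : ℕ) :
    {a : Fin (3 * 1 + 1) → ℕ // IsDiamond 1 a ∧ ∑ i, a i = n} ≃
      ({x : T4 // f4 x = n} ⊕ {x : T4 // f4 x + 2 = n}) where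
  toFun a :=
    if h : a.1 1 ≤ a.1 2 then
      Sum.inl ⟨(a.1 3, (a.1 1 - a.1 3, (a.1 2 - a.1 1, (a.1 0 - a.1 2, ())))), by
        have q1 : a.1 1 ≤ a.1 0 := (a.2.1 0 Nat.one_pos).1
        have q2 : a.1 2 ≤ a.1 0 := (a.2.1 0 Nat.one_pos).2.1
        have q3 : a.1 3 ≤ a.1 1 := (a.2.1 0 Nat.one_pos).2.2.1
        have hs : a.1 0 + a.1 1 + a.1 2 + a.1 3 = n :=
          (Fin.sum_univ_four a.1).symm.trans a.2.2
        simp only [f4, f3, f2, f1, f0]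
        omega⟩
    else
      Sum.inr ⟨(a.1 3, (a.1 2 - a.1 3, (a.1 1 - a.1 2 - 1, (a.1 0 - a.1 1, ())))), by
        have q1 : a.1 1 ≤ a.1 0 := (a.2.1 0 Nat.one_pos).1
        have q4 : a.1 3 ≤ a.1 2 := (a.2.1 0 Nat.one_pos).2.2.2
        have hs : a.1 0 + a.1 1 + a.1 2 + a.1 3 = n :=
          (Fin.sum_univ_four a.1).symm.trans a.2.2
        simp only [f4, f3, f2, f1, f0]
        omega⟩
  invFun y :=
    match y with
    | Sum.inl ⟨(d, (u, (t, (w, _)))), h⟩ =>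
      ⟨![d + u + t + w, d + u, d + u + t, d], by
        constructor
        · intro i hi
          have hi0 : i = 0 := by omega
          subst hi0
          refine ⟨?_, ?_, ?_, ?_⟩ <;> · show _ ≤ _; simp <;> omega
        · simp only [f4, f3, f2, f1, f0] at h
          exact (Fin.sum_univ_four _).trans (by simp; omega)⟩
    | Sum.inr ⟨(d, (v, (s, (w, _)))), h⟩ =>
      ⟨![d + v + 1 + s + w, d + v + 1 + s, d + v, d], by
        constructor
        · intro i hi
          have hi0 : i = 0 := by omega
          subst hi0
          refine ⟨?_, ?_, ?_, ?_⟩ <;> · show _ ≤ _; simp <;> omega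
        · simp only [f4, f3, f2, f1, f0] at h
          exact (Fin.sum_univ_four _).trans (by simp; omega)⟩
  left_inv := by
    rintro ⟨a, hd, hs⟩
    have q1 : a 1 ≤ a 0 := (hd 0 Nat.one_pos).1
    have q2 : a 2 ≤ a 0 := (hd 0 Nat.one_pos).2.1
    have q3 : a 3 ≤ a 1 := (hd 0 Nat.one_pos).2.2.1
    have q4 : a 3 ≤ a 2 := (hd 0 Nat.one_pos).2.2.2
    by_cases h : a 1 ≤ a 2
    · simp only [dif_pos h]
      apply Subtype.ext
      funext i
      fin_cases i <;> · show _ = _; simp <;> omega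
    · simp only [dif_neg h]
      apply Subtype.ext
      funext i
      fin_cases i <;> · show _ = _; simp <;> omega
  right_inv := by
    rintro (⟨⟨d, u, t, w, u0⟩, h⟩ | ⟨⟨d, v, s, w, u0⟩, h⟩) <;> cases u0 <;> dsimp only
    · rw [dif_pos (show (![d + u + t + w, d + u, d + u + t, d] : Fin 4 → ℕ) 1 ≤
          (![d + u + t + w, d + u, d + u + t, d] : Fin 4 → ℕ) 2 by simp <;> omega)]
      simp only [Sum.inl.injEq, Subtype.mk.injEq, Prod.mk.injEq]
      simp <;> omega
    · rw [dif_neg (show ¬((![d + v + 1 + s + w, d + v + 1 + s, d + v, d] : Fin 4 → ℕ) 1 ≤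
          (![d + v + 1 + s + w, d + v + 1 + s, d + v, d] : Fin 4 → ℕ) 2) by simp <;> omega)]
      simp only [Sum.inr.injEq, Subtype.mk.injEq, Prod.mk.injEq]
      simp <;> omega

lemma ppD_one (n : ℕ) :
    ppD 1 n = cnt f4 n + if 2 ≤ n then cnt f4 (n - 2) else 0 := by
  rw [ppD, Nat.card_congr (dEquiv n)]
  haveI := fin4 n
  haveI : Finite {x : T4 // f4 x + 2 = n} := by
    rcases le_or_gt 2 n with hle | hlt
    · haveI := fin4 (n - 2)
      exact Finite.of_equiv {x : T4 // f4 x = n - 2}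
        (Equiv.subtypeEquivRight (fun q => by omega))
    · haveI : IsEmpty {x : T4 // f4 x + 2 = n} := ⟨fun q => by have := q.2; omega⟩
      infer_instance
  rw [Nat.card_sum, card_plus_eq f4 2 n]
  rfl


/-- MacMahon's identity
`(∑ D_1(n) qⁿ) · (1 − q)(1 − q²)²(1 − q³) = 1` in `ℤ[[q]]`. -/
theorem stmt11 :
    (PowerSeries.mk fun n => (ppD 1 n : ℤ)) *
        ((1 - (PowerSeries.X : PowerSeries ℤ)) *
          (1 - (PowerSeries.X : PowerSeries ℤ) ^ 2) ^ 2 *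
          (1 - (PowerSeries.X : PowerSeries ℤ) ^ 3))
      = 1 := by
  set X : PowerSeries ℤ := PowerSeries.X
  have hmk : (PowerSeries.mk fun n => (ppD 1 n : ℤ)) =
      (PowerSeries.mk fun n => (cnt f4 n : ℤ)) * (1 + X ^ 2) := by
    ext n
    rw [mul_add, mul_one, map_add, PowerSeries.coeff_mul_X_pow']
    simp only [PowerSeries.coeff_mk]
    have := ppD_one n
    split_ifs with hle
    · rw [if_pos hle] at this; omega
    · rw [if_neg hle] at this; omega
  rw [hmk]
  have key : (PowerSeries.mk fun n => (cnt f4 n : ℤ)) * (1 + X ^ 2) *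
      ((1 - X) * (1 - X ^ 2) ^ 2 * (1 - X ^ 3)) =
      ((((PowerSeries.mk fun n => (cnt f4 n : ℤ)) * (1 - X ^ 4)) * (1 - X ^ 3)) *
        (1 - X ^ 2)) * (1 - X) := by ring
  rw [key, S4, S3, S2, S1, S0]
end
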